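/- Characterization of the service rate region when n = k + i − 1: a nonnegative vector λ = (λ_1,…,λ_k) belongs to S_i(k+i−1, k) if and only if Σ_{j=1}^k λ_j ≤ i and, for every subset A ⊆ [i], k·(Σ_{j∈A} λ_j + Σ_{j=i+1}^k λ_j) + Σ_{j∈[i]\A} λ_j ≤ (k + i − 1) + |A|·(k−1). -/

import Mathlib

open Matrix

/-- `R ⊆ [n]` is a recovery set for object `j` under generator matrix `G`:
the standard basis vector `e_j` lies in the span of the columns of `G` indexed by `R`,
and minimally so. -/
def IsRecoverySet {F : Type*} [Field F] {k n : ℕ} (G : Matrix (Fin k) (Fin n) F)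
    (j : Fin k) (R : Finset (Fin n)) : Prop :=
  (Pi.single j 1 : Fin k → F) ∈ Submodule.span F (Gᵀ '' (R : Set (Fin n))) ∧
    ∀ S : Finset (Fin n), S ⊂ R →
      (Pi.single j 1 : Fin k → F) ∉ Submodule.span F (Gᵀ '' (S : Set (Fin n)))

/-- A valid allocation of request rates `lam` to recovery sets: nonnegative weights
`w j R` supported on recovery sets, summing to `lam j` for each object `j`, and
loading each server `l` by at most its unit capacity. -/
def IsValidAllocation {F : Type*} [Field F] {k n : ℕ} (G : Matrix (Fin k) (Fin n) F)
    (lam : Fin k → ℝ) (w : Fin k → Finset (Fin n) → ℝ) : Prop :=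
  (∀ j R, 0 ≤ w j R) ∧
  (∀ j R, ¬ IsRecoverySet G j R → w j R = 0) ∧
  (∀ j, ∑ R : Finset (Fin n), w j R = lam j) ∧
  (∀ l : Fin n, ∑ j : Fin k, ∑ R ∈ Finset.univ.filter (fun R : Finset (Fin n) => l ∈ R),
      w j R ≤ 1)

/-- The service rate region of `G`. -/
def ServiceRegion {F : Type*} [Field F] {k n : ℕ} (G : Matrix (Fin k) (Fin n) F) :
    Set (Fin k → ℝ) :=
  {lam | (∀ j, 0 ≤ lam j) ∧ ∃ w, IsValidAllocation G lam w}

/-- `Gmat M i` = the `k × n` matrix formed by the `i` leftmost (systematic) columns of `M`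
followed by the `n - i` rightmost (parity) columns of `M`. -/
def Gmat {F : Type*} [Field F] {k n : ℕ} (M : Matrix (Fin k) (Fin (k + n)) F) (i : ℕ) :
    Matrix (Fin k) (Fin n) F :=
  Matrix.of fun r l =>
    if (l : ℕ) < i then M r ⟨(l : ℕ), by have := l.isLt; omega⟩
    else M r ⟨k + (l : ℕ), by have := l.isLt; omega⟩

section Decomp
variable {m : ℕ}

def IsDecomp (k : ℕ) (t : Fin m → ℝ) (W : Finset (Fin m) → ℝ) : Prop :=
  (∀ S, 0 ≤ W S) ∧ (∑ S : Finset (Fin m), W S = 1) ∧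
    (∀ a, ∑ S ∈ Finset.univ.filter (fun S : Finset (Fin m) => a ∈ S), W S = t a) ∧
    (∀ S, W S ≠ 0 → 1 ≤ S.card ∧ S.card ≤ k)

lemma decomp_combine {k : ℕ} {t t1 t2 : Fin m → ℝ} {θ : ℝ} (h0 : 0 ≤ θ) (h1 : θ ≤ 1)
    (ht : ∀ x, t x = θ * t1 x + (1 - θ) * t2 x)
    (H1 : ∃ W, IsDecomp k t1 W) (H2 : ∃ W, IsDecomp k t2 W) :
    ∃ W, IsDecomp k t W := by
  obtain ⟨W1, hW1n, hW1s, hW1a, hW1c⟩ := H1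
  obtain ⟨W2, hW2n, hW2s, hW2a, hW2c⟩ := H2
  refine ⟨fun S => θ * W1 S + (1 - θ) * W2 S, fun S => ?_, ?_, fun a => ?_, fun S hS => ?_⟩
  · have := hW1n S; have := hW2n S; dsimp only; nlinarith
  · dsimp only
    rw [Finset.sum_add_distrib, ← Finset.mul_sum, ← Finset.mul_sum, hW1s, hW2s]; ring
  · dsimp only
    rw [Finset.sum_add_distrib, ← Finset.mul_sum, ← Finset.mul_sum, hW1a, hW2a, ht]
  · by_cases h1' : W1 S ≠ 0
    · exact hW1c S h1'
    · by_cases h2' : W2 S ≠ 0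
      · exact hW2c S h2'
      · push_neg at h1' h2'
        exfalso; apply hS; dsimp only; rw [h1', h2']; ring

lemma decomp_int {k : ℕ} (t : Fin m → ℝ) (hint : ∀ a, t a = 0 ∨ t a = 1)
    (h1 : 1 ≤ ∑ a, t a) (hk : ∑ a, t a ≤ k) :
    ∃ W, IsDecomp k t W := by
  classical
  set S₀ : Finset (Fin m) := Finset.univ.filter (fun a => t a = 1) with hS₀
  have hcard : (S₀.card : ℝ) = ∑ a, t a := by
    rw [← Finset.sum_filter_add_sum_filter_not Finset.univ (fun a => t a = 1) t]
    rw [Finset.sum_congr rfl (fun a ha => (Finset.mem_filter.mp ha).2)]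
    have hz : ∑ a ∈ Finset.univ.filter (fun a => ¬ t a = 1), t a = 0 := by
      apply Finset.sum_eq_zero
      intro a ha
      rcases hint a with h | h
      · exact h
      · exact absurd h (Finset.mem_filter.mp ha).2
    rw [hz, add_zero, Finset.sum_const, nsmul_eq_mul, mul_one]
  have hmemiff : ∀ a, (S₀ ∈ Finset.univ.filter (fun S : Finset (Fin m) => a ∈ S)) ↔ t a = 1 := by
    intro a; simp [hS₀]
  refine ⟨fun S => if S = S₀ then 1 else 0, fun S => by dsimp only; positivity, ?_,
    fun a => ?_, fun S hS => ?_⟩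
  · rw [Finset.sum_ite_eq' Finset.univ S₀ (fun _ => (1:ℝ))]
    simp
  · rw [Finset.sum_ite_eq' _ S₀ (fun _ => (1:ℝ))]
    rcases hint a with h | h
    · rw [if_neg, h]
      intro hmem
      rw [(hmemiff a).mp hmem] at h
      norm_num at h
    · rw [if_pos ((hmemiff a).mpr h), h]
  · have hSeq : S = S₀ := by
      by_contra hne
      apply hS; dsimp only; rw [if_neg hne]
    have c1 : (1:ℝ) ≤ (S₀.card : ℝ) := by rw [hcard]; exact h1
    have c2 : (S₀.card : ℝ) ≤ (k:ℝ) := by rw [hcard]; exact hk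
    rw [hSeq]
    exact ⟨by exact_mod_cast c1, by exact_mod_cast c2⟩

lemma decomp_main {k : ℕ} :
    ∀ N (t : Fin m → ℝ),
      (Finset.univ.filter (fun a => t a ≠ 0 ∧ t a ≠ 1)).card ≤ N →
      (∀ a, 0 ≤ t a) → (∀ a, t a ≤ 1) → 1 ≤ ∑ a, t a → ∑ a, t a ≤ k →
      ∃ W, IsDecomp k t W := by
  classical
  intro N
  induction N with
  | zero =>
    intro t hN h0 h1 hs1 hsk
    apply decomp_int t _ hs1 hsk
    intro a
    by_contra hcon
    push_neg at hcon
    have hmem : a ∈ Finset.univ.filter (fun a => t a ≠ 0 ∧ t a ≠ 1) :=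
      Finset.mem_filter.mpr ⟨Finset.mem_univ a, hcon⟩
    have := Finset.card_pos.mpr ⟨a, hmem⟩
    omega
  | succ N ih =>
    intro t hN h0 h1 hs1 hsk
    set Frac := Finset.univ.filter (fun a => t a ≠ 0 ∧ t a ≠ 1) with hFrac
    by_cases hne : Frac.Nonempty
    · obtain ⟨c, hc⟩ := hne
      obtain ⟨hc0, hc1⟩ := (Finset.mem_filter.mp hc).2
      have htc0 : 0 < t c := lt_of_le_of_ne (h0 c) (Ne.symm hc0)
      have htc1 : t c < 1 := lt_of_le_of_ne (h1 c) hc1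
      have key : ∀ (u : Fin m → ℝ), (∀ x, x ≠ c → u x ≠ 0 ∧ u x ≠ 1 → t x ≠ 0 ∧ t x ≠ 1) →
          (∃ x₀ ∈ Frac, ¬(u x₀ ≠ 0 ∧ u x₀ ≠ 1)) →
          (Finset.univ.filter (fun a => u a ≠ 0 ∧ u a ≠ 1)).card ≤ N := by
        intro u hu hex
        obtain ⟨x₀, hx₀F, hx₀⟩ := hex
        have hss : Finset.univ.filter (fun a => u a ≠ 0 ∧ u a ≠ 1) ⊂ Frac := by
          constructor
          · intro a ha
            obtain ⟨_, ha2⟩ := Finset.mem_filter.mp ha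
            by_cases hac : a = c
            · subst hac; exact hc
            · exact Finset.mem_filter.mpr ⟨Finset.mem_univ a, hu a hac ha2⟩
          · intro hsup
            exact hx₀ (Finset.mem_filter.mp (hsup hx₀F)).2
        have := Finset.card_lt_card hss
        omega
      by_cases h2 : ∃ b ∈ Frac, b ≠ c
      · -- two fractional coordinates
        obtain ⟨b, hb, hbc⟩ := h2
        obtain ⟨hb0, hb1⟩ := (Finset.mem_filter.mp hb).2
        have htb0 : 0 < t b := lt_of_le_of_ne (h0 b) (Ne.symm hb0)
        have htb1 : t b < 1 := lt_of_le_of_ne (h1 b) hb1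
        set α := min (1 - t c) (t b) with hα
        set β := min (t c) (1 - t b) with hβ
        have hα0 : 0 < α := lt_min (by linarith) htb0
        have hβ0 : 0 < β := lt_min htc0 (by linarith)
        set p : Fin m → ℝ := fun x => (if x = c then (1:ℝ) else 0) - (if x = b then 1 else 0)
          with hp
        have hsump : ∑ x, p x = 0 := by
          simp only [hp, Finset.sum_sub_distrib]
          rw [Finset.sum_ite_eq' Finset.univ c (fun _ => (1:ℝ)),
            Finset.sum_ite_eq' Finset.univ b (fun _ => (1:ℝ))]
          simp
        set t1 : Fin m → ℝ := fun x => t x + α * p x with ht1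
        set t2 : Fin m → ℝ := fun x => t x - β * p x with ht2
        have hpc : p c = 1 := by simp [hp, hbc.symm]
        have hpb : p b = -1 := by simp [hp, hbc]
        have hpother : ∀ x, x ≠ c → x ≠ b → p x = 0 := by
          intro x hxc hxb; simp [hp, hxc, hxb]
        have ht1c : t1 c = t c + α := by simp only [ht1, hpc]; ring
        have ht1b' : t1 b = t b - α := by simp only [ht1, hpb]; ring
        have ht2c : t2 c = t c - β := by simp only [ht2, hpc]; ring
        have ht2b' : t2 b = t b + β := by simp only [ht2, hpb]; ring
        have ht1o : ∀ x, x ≠ c → x ≠ b → t1 x = t x := by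
          intro x hxc hxb; simp [ht1, hpother x hxc hxb]
        have ht2o : ∀ x, x ≠ c → x ≠ b → t2 x = t x := by
          intro x hxc hxb; simp [ht2, hpother x hxc hxb]
        have hαle1 : α ≤ 1 - t c := min_le_left _ _
        have hαle2 : α ≤ t b := min_le_right _ _
        have hβle1 : β ≤ t c := min_le_left _ _
        have hβle2 : β ≤ 1 - t b := min_le_right _ _
        have ht1bd : ∀ x, 0 ≤ t1 x ∧ t1 x ≤ 1 := by
          intro x
          by_cases hxc : x = c
          · subst hxc; rw [ht1c]; constructor <;> linarith
          · by_cases hxb : x = b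
            · subst hxb; rw [ht1b']; constructor <;> linarith [h1 x]
            · rw [ht1o x hxc hxb]; exact ⟨h0 x, h1 x⟩
        have ht2bd : ∀ x, 0 ≤ t2 x ∧ t2 x ≤ 1 := by
          intro x
          by_cases hxc : x = c
          · subst hxc; rw [ht2c]; constructor <;> linarith [h1 x]
          · by_cases hxb : x = b
            · subst hxb; rw [ht2b']; constructor <;> linarith
            · rw [ht2o x hxc hxb]; exact ⟨h0 x, h1 x⟩
        have hsum1 : ∑ x, t1 x = ∑ x, t x := by
          simp only [ht1]
          rw [Finset.sum_add_distrib, ← Finset.mul_sum, hsump]; ring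
        have hsum2 : ∑ x, t2 x = ∑ x, t x := by
          simp only [ht2]
          rw [Finset.sum_sub_distrib, ← Finset.mul_sum, hsump]; ring
        have hN1 : (Finset.univ.filter (fun a => t1 a ≠ 0 ∧ t1 a ≠ 1)).card ≤ N := by
          apply key t1
          · intro x hxc hx
            by_cases hxb : x = b
            · subst hxb; exact ⟨hb0, hb1⟩
            · rwa [ht1o x hxc hxb] at hx
          · rcases min_cases (1 - t c) (t b) with ⟨he, _⟩ | ⟨he, _⟩
            · refine ⟨c, hc, ?_⟩
              rw [not_and_or, not_ne_iff, not_ne_iff]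
              right; rw [ht1c, hα, he]; ring
            · refine ⟨b, hb, ?_⟩
              rw [not_and_or, not_ne_iff, not_ne_iff]
              left; rw [ht1b', hα, he]; ring
        have hN2 : (Finset.univ.filter (fun a => t2 a ≠ 0 ∧ t2 a ≠ 1)).card ≤ N := by
          apply key t2
          · intro x hxc hx
            by_cases hxb : x = b
            · subst hxb; exact ⟨hb0, hb1⟩
            · rwa [ht2o x hxc hxb] at hx
          · rcases min_cases (t c) (1 - t b) with ⟨he, _⟩ | ⟨he, _⟩
            · refine ⟨c, hc, ?_⟩
              rw [not_and_or, not_ne_iff, not_ne_iff]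
              left; rw [ht2c, hβ, he]; ring
            · refine ⟨b, hb, ?_⟩
              rw [not_and_or, not_ne_iff, not_ne_iff]
              right; rw [ht2b', hβ, he]; ring
        have H1 := ih t1 hN1 (fun a => (ht1bd a).1) (fun a => (ht1bd a).2)
          (by rw [hsum1]; exact hs1) (by rw [hsum1]; exact hsk)
        have H2 := ih t2 hN2 (fun a => (ht2bd a).1) (fun a => (ht2bd a).2)
          (by rw [hsum2]; exact hs1) (by rw [hsum2]; exact hsk)
        have hab : 0 < α + β := by linarith
        refine decomp_combine (θ := β / (α + β)) (by positivity) ?_ ?_ H1 H2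
        · rw [div_le_one hab]; linarith
        · intro x
          have e1 : t1 x = t x + α * p x := rfl
          have e2 : t2 x = t x - β * p x := rfl
          rw [e1, e2]
          field_simp
          ring
      · -- exactly one fractional coordinate
        push_neg at h2
        have hall : ∀ x, x ≠ c → t x = 0 ∨ t x = 1 := by
          intro x hxc
          by_contra hcon
          push_neg at hcon
          exact hxc (h2 x (Finset.mem_filter.mpr ⟨Finset.mem_univ x, hcon⟩))
        set t1 : Fin m → ℝ := fun x => if x = c then 1 else t x with ht1
        set t2 : Fin m → ℝ := fun x => if x = c then 0 else t x with ht2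
        have hsplit : ∀ (v : ℝ), ∑ x, (if x = c then v else t x) = ∑ x, t x + (v - t c) := by
          intro v
          have : ∀ x, (if x = c then v else t x) = t x + (if x = c then v - t c else 0) := by
            intro x; by_cases hx : x = c <;> simp [hx]
          rw [Finset.sum_congr rfl (fun x _ => this x), Finset.sum_add_distrib,
            Finset.sum_ite_eq' Finset.univ c (fun _ => v - t c)]
          simp
        have hsum1 : ∑ x, t1 x = ∑ x, t x + (1 - t c) := hsplit 1
        have hsum2 : ∑ x, t2 x = ∑ x, t x - t c := by
          rw [ht2, hsplit 0]; ring
        -- integrality of ∑ t2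
        set S₁ := Finset.univ.filter (fun x => ¬ x = c ∧ t x = 1) with hS₁
        have hsum2card : ∑ x, t2 x = (S₁.card : ℝ) := by
          rw [← Finset.sum_filter_add_sum_filter_not Finset.univ (fun x => ¬ x = c ∧ t x = 1) t2]
          have e1 : ∑ x ∈ S₁, t2 x = (S₁.card : ℝ) := by
            rw [Finset.sum_congr rfl (fun x hx => ?_), Finset.sum_const, nsmul_eq_mul, mul_one]
            obtain ⟨_, hx1, hx2⟩ := Finset.mem_filter.mp hx
            simp [ht2, hx1, hx2]
          have e2 : ∑ x ∈ Finset.univ.filter (fun x => ¬(¬ x = c ∧ t x = 1)), t2 x = 0 := by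
            apply Finset.sum_eq_zero
            intro x hx
            obtain ⟨_, hx2⟩ := Finset.mem_filter.mp hx
            by_cases hxc : x = c
            · simp [ht2, hxc]
            · rcases hall x hxc with h | h
              · simp [ht2, hxc, h]
              · exact absurd ⟨hxc, h⟩ hx2
          rw [e1, e2, add_zero]
        have hS₁pos : 1 ≤ S₁.card := by
          by_contra hcon
          have : S₁.card = 0 := by omega
          rw [this] at hsum2card
          push_cast at hsum2card
          rw [hsum2] at hsum2card
          linarith
        have hS₁k : S₁.card + 1 ≤ k := by
          have hreal : (S₁.card : ℝ) < k := by
            rw [← hsum2card, hsum2]; linarith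
          have : S₁.card < k := by exact_mod_cast hreal
          omega
        have hz1 : (Finset.univ.filter (fun a => t1 a ≠ 0 ∧ t1 a ≠ 1)).card ≤ N := by
          have : Finset.univ.filter (fun a => t1 a ≠ 0 ∧ t1 a ≠ 1) = ∅ := by
            apply Finset.filter_eq_empty_iff.mpr
            intro x _
            by_cases hxc : x = c
            · simp [ht1, hxc]
            · rcases hall x hxc with h | h <;> simp [ht1, hxc, h]
          rw [this]; simp
        have hz2 : (Finset.univ.filter (fun a => t2 a ≠ 0 ∧ t2 a ≠ 1)).card ≤ N := by
          have : Finset.univ.filter (fun a => t2 a ≠ 0 ∧ t2 a ≠ 1) = ∅ := by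
            apply Finset.filter_eq_empty_iff.mpr
            intro x _
            by_cases hxc : x = c
            · simp [ht2, hxc]
            · rcases hall x hxc with h | h <;> simp [ht2, hxc, h]
          rw [this]; simp
        have H1 := ih t1 hz1 (fun a => ?_) (fun a => ?_) ?_ ?_
        rotate_left
        · by_cases hxc : a = c
          · simp [ht1, hxc]
          · simp only [ht1, if_neg hxc]; exact h0 a
        · by_cases hxc : a = c
          · simp [ht1, hxc]
          · simp only [ht1, if_neg hxc]; exact h1 a
        · rw [hsum1]; linarith
        · have hcast : (S₁.card : ℝ) + 1 ≤ (k:ℝ) := by exact_mod_cast hS₁k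
          have he : ∑ x, t x = (S₁.card : ℝ) + t c := by
            rw [← hsum2card, hsum2]; ring
          rw [hsum1, he]; linarith
        have H2 := ih t2 hz2 (fun a => ?_) (fun a => ?_) ?_ ?_
        rotate_left
        · by_cases hxc : a = c
          · simp [ht2, hxc]
          · simp only [ht2, if_neg hxc]; exact h0 a
        · by_cases hxc : a = c
          · simp [ht2, hxc]
          · simp only [ht2, if_neg hxc]; exact h1 a
        · rw [hsum2card]
          exact_mod_cast hS₁pos
        · rw [hsum2]; linarith
        refine decomp_combine (θ := t c) (le_of_lt htc0) (le_of_lt htc1) ?_ H1 H2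
        intro x
        by_cases hxc : x = c
        · subst hxc; simp [ht1, ht2]
        · simp [ht1, ht2, hxc]; ring
    · rw [Finset.not_nonempty_iff_eq_empty] at hne
      apply decomp_int t _ hs1 hsk
      intro a
      by_contra hcon
      push_neg at hcon
      have hmem : a ∈ Frac := Finset.mem_filter.mpr ⟨Finset.mem_univ a, hcon⟩
      rw [hne] at hmem
      simp at hmem
end Decomp
section Helpers
variable {n i k : ℕ}

lemma sum_min_le_sum {ι : Type*} (s : Finset ι) (r : ι → ℝ) (hr : ∀ a ∈ s, 0 ≤ r a)
    (c : ℝ) (hc : 0 ≤ c) : min c (∑ a ∈ s, r a) ≤ ∑ a ∈ s, min c (r a) := by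
  by_cases hex : ∃ a ∈ s, c ≤ r a
  · obtain ⟨a, ha, hca⟩ := hex
    calc min c (∑ a ∈ s, r a) ≤ c := min_le_left _ _
      _ = min c (r a) := (min_eq_left hca).symm
      _ ≤ ∑ a ∈ s, min c (r a) :=
          Finset.single_le_sum (fun b hb => le_min hc (hr b hb)) ha
  · push_neg at hex
    calc min c (∑ a ∈ s, r a) ≤ ∑ a ∈ s, r a := min_le_right _ _
      _ = ∑ a ∈ s, min c (r a) := by
          apply Finset.sum_congr rfl
          intro a ha
          rw [min_eq_right (le_of_lt (hex a ha))]

/-- Splitting a sum over all finsets of `Fin n` into systematic/parity parts. -/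
lemma sum_split_finsets (i : ℕ) (f : Finset (Fin n) → ℝ) :
    ∑ R : Finset (Fin n), f R =
      ∑ S ∈ (Finset.univ.filter (fun a : Fin n => (a : ℕ) < i)).powerset,
        ∑ T ∈ (Finset.univ.filter (fun a : Fin n => ¬ (a : ℕ) < i)).powerset, f (S ∪ T) := by
  classical
  rw [← Finset.sum_product']
  apply Finset.sum_bij'
    (i := fun (R : Finset (Fin n)) (_ : R ∈ Finset.univ) =>
      (R.filter (fun a : Fin n => (a : ℕ) < i), R.filter (fun a : Fin n => ¬ (a : ℕ) < i)))
    (j := fun (p : Finset (Fin n) × Finset (Fin n)) _ => p.1 ∪ p.2)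
  · intro R _
    rw [Finset.mem_product]
    constructor
    · rw [Finset.mem_powerset]
      intro a ha
      rw [Finset.mem_filter] at ha ⊢
      exact ⟨Finset.mem_univ _, ha.2⟩
    · rw [Finset.mem_powerset]
      intro a ha
      rw [Finset.mem_filter] at ha ⊢
      exact ⟨Finset.mem_univ _, ha.2⟩
  · intro p _
    exact Finset.mem_univ _
  · intro R _
    exact Finset.filter_union_filter_not_eq _ R
  · intro p hp
    rw [Finset.mem_product, Finset.mem_powerset, Finset.mem_powerset] at hp
    obtain ⟨h1, h2⟩ := hp
    have e1 : (p.1 ∪ p.2).filter (fun a : Fin n => (a : ℕ) < i) = p.1 := by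
      ext a
      simp only [Finset.mem_filter, Finset.mem_union]
      constructor
      · rintro ⟨h | h, hlt⟩
        · exact h
        · exact absurd hlt (Finset.mem_filter.mp (h2 h)).2
      · intro h
        exact ⟨Or.inl h, (Finset.mem_filter.mp (h1 h)).2⟩
    have e2 : (p.1 ∪ p.2).filter (fun a : Fin n => ¬ (a : ℕ) < i) = p.2 := by
      ext a
      simp only [Finset.mem_filter, Finset.mem_union]
      constructor
      · rintro ⟨h | h, hlt⟩
        · exact absurd (Finset.mem_filter.mp (h1 h)).2 hlt
        · exact h
      · intro h
        exact ⟨Or.inr h, (Finset.mem_filter.mp (h2 h)).2⟩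
    rw [e1, e2]
  · intro R _
    rw [Finset.filter_union_filter_not_eq _ R]

lemma count_subsets_containing {α : Type*} [DecidableEq α] (P : Finset α) (l : α)
    (hl : l ∈ P) (c : ℕ) (hc : 1 ≤ c) :
    (P.powerset.filter (fun T => T.card = c ∧ l ∈ T)).card = (P.card - 1).choose (c - 1) := by
  rw [show (P.card - 1).choose (c-1) = ((P.erase l).powersetCard (c-1)).card by
    rw [Finset.card_powersetCard, Finset.card_erase_of_mem hl]]
  refine Finset.card_bij' (fun T _ => T.erase l) (fun T _ => insert l T) ?hi ?hj ?li ?ri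
  case hi =>
    intro T hT
    rw [Finset.mem_filter, Finset.mem_powerset] at hT
    obtain ⟨hsub, hcard, hmem⟩ := hT
    rw [Finset.mem_powersetCard]
    constructor
    · exact Finset.erase_subset_erase l hsub
    · rw [Finset.card_erase_of_mem hmem, hcard]
  case hj =>
    intro T hT
    rw [Finset.mem_powersetCard] at hT
    obtain ⟨hsub, hcard⟩ := hT
    have hlnot : l ∉ T := fun hmem => Finset.notMem_erase l P (hsub hmem)
    rw [Finset.mem_filter, Finset.mem_powerset]
    refine ⟨?_, ?_, Finset.mem_insert_self _ _⟩
    · intro a ha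
      rcases Finset.mem_insert.mp ha with rfl | h
      · exact hl
      · exact Finset.erase_subset _ _ (hsub h)
    · rw [Finset.card_insert_of_notMem hlnot, hcard]
      omega
  case li =>
    intro T hT
    rw [Finset.mem_filter] at hT
    exact Finset.insert_erase hT.2.2
  case ri =>
    intro T hT
    rw [Finset.mem_powersetCard] at hT
    have hlnot : l ∉ T := fun hmem => Finset.notMem_erase l P (hT.1 hmem)
    exact Finset.erase_insert hlnot

lemma sum_ite_eq_single_finset {β : Type*} [Fintype β] [DecidableEq β]
    (P : Prop) [Decidable P] (R₀ : Finset β) (l : β) (c : ℝ) :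
    ∑ R ∈ Finset.univ.filter (fun R : Finset β => l ∈ R),
      (if P ∧ R = R₀ then c else 0) = if P ∧ l ∈ R₀ then c else 0 := by
  by_cases hP : P
  · simp only [hP, true_and]
    rw [Finset.sum_ite_eq' _ R₀ (fun _ => c)]
    congr 1
    simp
  · simp [hP]

lemma filter_lt_eq_image (h : i ≤ n) : Finset.univ.filter (fun l : Fin n => (l : ℕ) < i)
    = Finset.univ.image (Fin.castLE h) := by
  ext a
  simp only [Finset.mem_filter, Finset.mem_univ, true_and, Finset.mem_image]
  constructor
  · intro ha
    exact ⟨⟨(a : ℕ), ha⟩, Fin.ext rfl⟩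
  · rintro ⟨b, rfl⟩
    simpa using b.isLt

/-- transfer a sum over the systematic part of `Fin n` to one over `Fin k`. -/
lemma sum_lt_transfer (hin : i ≤ n) (hik : i ≤ k) (f : Fin n → ℝ) (g : Fin k → ℝ)
    (hfg : ∀ (b : ℕ) (hbn : b < n) (hbk : b < k), b < i → f ⟨b, hbn⟩ = g ⟨b, hbk⟩) :
    ∑ a ∈ Finset.univ.filter (fun a : Fin n => (a : ℕ) < i), f a
      = ∑ j ∈ Finset.univ.filter (fun j : Fin k => (j : ℕ) < i), g j := by
  rw [filter_lt_eq_image hin, filter_lt_eq_image hik,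
    Finset.sum_image (fun x _ y _ h => Fin.castLE_injective hin h),
    Finset.sum_image (fun x _ y _ h => Fin.castLE_injective hik h)]
  apply Finset.sum_congr rfl
  intro b _
  exact hfg b (by omega) (by omega) b.isLt

end Helpers

lemma card_filter_lt_fin {n : ℕ} (i : ℕ) (h : i ≤ n) :
    (Finset.univ.filter (fun l : Fin n => (l : ℕ) < i)).card = i := by
  rw [filter_lt_eq_image h, Finset.card_image_of_injective _ (Fin.castLE_injective h),
    Finset.card_univ, Fintype.card_fin]

lemma univ_filter_mem {n : ℕ} (R : Finset (Fin n)) :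
    Finset.univ.filter (fun l : Fin n => l ∈ R) = R := by
  ext l; simp

section Struct
variable {F : Type*} [Field F] {k i n : ℕ}

def iotaCol (k i : ℕ) {n : ℕ} : Fin n → Fin (k + n) :=
  fun l => if (l : ℕ) < i then ⟨(l : ℕ), by have := l.isLt; omega⟩
    else ⟨k + (l : ℕ), by have := l.isLt; omega⟩

lemma gmat_transpose (M : Matrix (Fin k) (Fin (k + n)) F) (l : Fin n) :
    (Gmat M i)ᵀ l = Mᵀ (iotaCol k i l) := by
  funext r
  simp only [Gmat, transpose_apply, Matrix.of_apply, iotaCol]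
  split <;> rfl

lemma iotaCol_val (l : Fin n) :
    (iotaCol k i l : ℕ) = if (l : ℕ) < i then (l : ℕ) else k + (l : ℕ) := by
  simp only [iotaCol]
  split <;> rfl

lemma iotaCol_inj : Function.Injective (iotaCol k i (n := n)) := by
  intro a b hab
  have h := congrArg Fin.val hab
  rw [iotaCol_val, iotaCol_val] at h
  apply Fin.ext
  split at h <;> split at h <;> omega

lemma mtranspose_castAdd_eq_single (M : Matrix (Fin k) (Fin (k + n)) F)
    (hsys : ∀ j : Fin k, ∀ r : Fin k, M r (Fin.castAdd n j) = if r = j then (1 : F) else 0)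
    (j : Fin k) : Mᵀ (Fin.castAdd n j) = (Pi.single j 1 : Fin k → F) := by
  funext r
  rw [transpose_apply, hsys j r, Pi.single_apply]

lemma span_gmat_eq (M : Matrix (Fin k) (Fin (k + n)) F) (R : Finset (Fin n)) :
    Submodule.span F ((Gmat M i)ᵀ '' (R : Set (Fin n)))
      = Submodule.span F (Mᵀ '' ((R.image (iotaCol k i)) : Set (Fin (k + n)))) := by
  have h : ((Gmat M i)ᵀ : Fin n → Fin k → F) = Mᵀ ∘ iotaCol k i := funext (gmat_transpose M)
  rw [Finset.coe_image, h]
  exact congrArg _ (Set.image_comp _ _ _)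

lemma castAdd_mem_image_iota_iff (j : Fin k) (R : Finset (Fin n)) (hik : i ≤ k) :
    Fin.castAdd n j ∈ R.image (iotaCol k i) ↔
      ∃ l ∈ R, (l : ℕ) < i ∧ (l : ℕ) = (j : ℕ) := by
  rw [Finset.mem_image]
  constructor
  · rintro ⟨l, hl, he⟩
    have := congrArg Fin.val he
    rw [iotaCol_val] at this
    simp only [Fin.coe_castAdd] at this
    split at this
    · exact ⟨l, hl, by omega, this⟩
    · exfalso; have := j.isLt; omega
  · rintro ⟨l, hl, h1, h2⟩
    refine ⟨l, hl, ?_⟩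
    apply Fin.ext
    rw [iotaCol_val, if_pos h1]
    simpa using h2

-- the two aux lemmas from before (assume present): aux_not_mem_span, aux_span_top
lemma aux_restrict (M : Matrix (Fin k) (Fin n) F)
    (hMDS : ∀ S : Finset (Fin n), S.card = k →
      LinearIndependent F (fun l : S => Mᵀ (l : Fin n)))
    {Q : Finset (Fin n)} (hQ : Q.card ≤ k) (hkm : k ≤ n) :
    LinearIndependent F (fun l : Q => Mᵀ (l : Fin n)) := by
  obtain ⟨T, hQT, hT⟩ := Finset.exists_superset_card_eq hQ (by simpa using hkm)
  have h := hMDS T hT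
  exact h.comp (fun x : Q => (⟨x.1, hQT x.2⟩ : T))
    (fun a b hab => by
      apply Subtype.ext
      simpa using congrArg Subtype.val hab)

lemma aux_not_mem_span (M : Matrix (Fin k) (Fin n) F)
    (hMDS : ∀ S : Finset (Fin n), S.card = k →
      LinearIndependent F (fun l : S => Mᵀ (l : Fin n)))
    (hkm : k ≤ n) {Q : Finset (Fin n)} {idx : Fin n} (hidx : idx ∉ Q) (hcard : Q.card < k) :
    Mᵀ idx ∉ Submodule.span F (Mᵀ '' ↑Q) := by
  classical
  set Q' : Finset (Fin n) := insert idx Q with hQ'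
  have hQ'card : Q'.card ≤ k := by
    rw [Finset.card_insert_of_notMem hidx]; omega
  have hli := aux_restrict M hMDS hQ'card hkm
  have hxmem : idx ∈ Q' := Finset.mem_insert_self _ _
  set s : Set Q' := {y : Q' | (y : Fin n) ∈ Q} with hs
  have hx : (⟨idx, hxmem⟩ : Q') ∉ s := by
    intro h; exact hidx h
  have hmain := hli.notMem_span_image (s := s) (x := ⟨idx, hxmem⟩) hx
  have himg : (fun l : Q' => Mᵀ (l : Fin n)) '' s = Mᵀ '' ↑Q := by
    ext v
    constructor
    · rintro ⟨⟨l, hl⟩, hls, rfl⟩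
      exact ⟨l, hls, rfl⟩
    · rintro ⟨l, hl, rfl⟩
      exact ⟨⟨l, Finset.mem_insert_of_mem hl⟩, hl, rfl⟩
  rw [himg] at hmain
  exact hmain

lemma aux_span_top (M : Matrix (Fin k) (Fin n) F)
    (hMDS : ∀ S : Finset (Fin n), S.card = k →
      LinearIndependent F (fun l : S => Mᵀ (l : Fin n)))
    {Q : Finset (Fin n)} (hQ : Q.card = k) (hk : 0 < k) :
    Submodule.span F (Mᵀ '' ↑Q) = ⊤ := by
  have hne : Nonempty Q := by
    rw [Finset.nonempty_coe_sort, ← Finset.card_pos, hQ]; exact hk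
  have h := (hMDS Q hQ).span_eq_top_of_card_eq_finrank (by
    rw [Fintype.card_coe, hQ, Module.finrank_pi, Fintype.card_fin])
  rw [← h]
  congr 1
  ext v
  constructor
  · rintro ⟨l, hl, rfl⟩; exact ⟨⟨l, hl⟩, rfl⟩
  · rintro ⟨⟨l, hl⟩, rfl⟩; exact ⟨l, hl, rfl⟩

variable (M : Matrix (Fin k) (Fin (k + n)) F)
  (hsys : ∀ j : Fin k, ∀ r : Fin k, M r (Fin.castAdd n j) = if r = j then (1 : F) else 0)
  (hMDS : ∀ S : Finset (Fin (k + n)), S.card = k →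
      LinearIndependent F (fun l : S => Mᵀ (l : Fin (k + n))))

include hsys in
lemma recovery_singleton (hik : i ≤ k) (j : Fin k) (hj : (j : ℕ) < i) (hkn : k ≤ n) :
    IsRecoverySet (Gmat M i) j {Fin.castLE hkn j} := by
  have hcol : (Gmat M i)ᵀ (Fin.castLE hkn j) = (Pi.single j 1 : Fin k → F) := by
    rw [gmat_transpose]
    have : iotaCol k i (Fin.castLE hkn j) = Fin.castAdd n j := by
      apply Fin.ext
      rw [iotaCol_val]
      simp only [Fin.coe_castLE, Fin.coe_castAdd]
      rw [if_pos hj]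
    rw [this]
    exact mtranspose_castAdd_eq_single M hsys j
  constructor
  · apply Submodule.subset_span
    exact ⟨Fin.castLE hkn j, by simp, hcol⟩
  · intro S hS
    rw [Finset.eq_empty_of_ssubset_singleton hS]
    simp only [Finset.coe_empty, Set.image_empty, Submodule.span_empty]
    intro hmem
    rw [Set.image_empty (f := ((Gmat M i)ᵀ : Fin n → Fin k → F)), Submodule.span_empty,
      Submodule.mem_bot] at hmem
    have := congrFun hmem j
    simp at this

include hsys hMDS in
lemma recovery_card_k (hik : i ≤ k) (hk : 0 < k) (j : Fin k) (R : Finset (Fin n))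
    (hcard : R.card = k) (hnot : ¬ ∃ l ∈ R, (l : ℕ) < i ∧ (l : ℕ) = (j : ℕ)) :
    IsRecoverySet (Gmat M i) j R := by
  have hkn2 : k ≤ k + n := Nat.le_add_right _ _
  have hjmem : ∀ (S : Finset (Fin n)), S ⊆ R →
      Fin.castAdd n j ∉ S.image (iotaCol k i) := by
    intro S hSR hmem
    rw [castAdd_mem_image_iota_iff _ _ hik] at hmem
    obtain ⟨l, hl, h1, h2⟩ := hmem
    exact hnot ⟨l, hSR hl, h1, h2⟩
  constructor
  · rw [span_gmat_eq, aux_span_top M hMDS (by rw [Finset.card_image_of_injective _ iotaCol_inj]; exact hcard) hk]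
    trivial
  · intro S hS
    rw [span_gmat_eq]
    have hle : S.card < k := by
      have := Finset.card_lt_card hS
      omega
    have hQcard : (S.image (iotaCol k i)).card < k := by
      rw [Finset.card_image_of_injective _ iotaCol_inj]
      exact hle
    have := aux_not_mem_span M hMDS hkn2 (hjmem S hS.subset) hQcard
    rwa [mtranspose_castAdd_eq_single M hsys j] at this

include hsys hMDS in
lemma recovery_structure (hik : i ≤ k) (hk : 0 < k) (hkn : k ≤ n) (j : Fin k)
    (R : Finset (Fin n)) (hrec : IsRecoverySet (Gmat M i) j R) :
    ((j : ℕ) < i ∧ R = {Fin.castLE hkn j}) ∨ k ≤ R.card := by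
  by_cases hcard : k ≤ R.card
  · exact Or.inr hcard
  push_neg at hcard
  left
  by_cases hmem : ∃ l ∈ R, (l : ℕ) < i ∧ (l : ℕ) = (j : ℕ)
  · obtain ⟨l, hl, h1, h2⟩ := hmem
    have hji : (j : ℕ) < i := h2 ▸ h1
    have hlval : l = Fin.castLE hkn j := Fin.ext (by simpa using h2)
    refine ⟨hji, ?_⟩
    rw [← hlval]
    by_contra hne
    have hss : {l} ⊂ R := by
      refine ssubset_iff_subset_ne.mpr ⟨Finset.singleton_subset_iff.mpr hl, ?_⟩
      intro he
      exact hne he.symm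
    apply hrec.2 {l} hss
    apply Submodule.subset_span
    refine ⟨l, by simp, ?_⟩
    rw [gmat_transpose]
    have : iotaCol k i l = Fin.castAdd n j := by
      apply Fin.ext
      rw [iotaCol_val, if_pos h1]
      simpa using h2
    rw [this]
    exact mtranspose_castAdd_eq_single M hsys j
  · exfalso
    have h1 := hrec.1
    rw [span_gmat_eq] at h1
    have hidx : Fin.castAdd n j ∉ R.image (iotaCol k i) := by
      rw [castAdd_mem_image_iota_iff _ _ hik]
      exact hmem
    have hQcard : (R.image (iotaCol k i)).card < k := by
      rw [Finset.card_image_of_injective _ iotaCol_inj]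
      exact hcard
    have := aux_not_mem_span M hMDS (Nat.le_add_right _ _) hidx hQcard
    rw [mtranspose_castAdd_eq_single M hsys j] at this
    exact this h1

end Struct
section CB
variable {F : Type*} [Field F] {k n : ℕ}
lemma converse_bound (G : Matrix (Fin k) (Fin n) F) (lam : Fin k → ℝ)
    (w : Fin k → Finset (Fin n) → ℝ) (hw : IsValidAllocation G lam w)
    (α : Fin n → ℝ) (hα : ∀ l, 0 ≤ α l) (c : Fin k → ℝ)
    (hc : ∀ j R, IsRecoverySet G j R → c j ≤ ∑ l ∈ R, α l) :
    ∑ j, c j * lam j ≤ ∑ l, α l := by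
  obtain ⟨hw0, hwrec, hwsum, hwload⟩ := hw
  have step1 : ∑ j, c j * lam j = ∑ j, ∑ R : Finset (Fin n), c j * w j R := by
    apply Finset.sum_congr rfl
    intro j _
    rw [← Finset.mul_sum, hwsum j]
  have step2 : ∀ j (R : Finset (Fin n)), c j * w j R ≤ (∑ l ∈ R, α l) * w j R := by
    intro j R
    by_cases h : w j R = 0
    · rw [h]; simp
    · have hrec : IsRecoverySet G j R := by
        by_contra hcon
        exact h (hwrec j R hcon)
      exact mul_le_mul_of_nonneg_right (hc j R hrec) (hw0 j R)
  have step3 : ∑ j, ∑ R : Finset (Fin n), (∑ l ∈ R, α l) * w j R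
      = ∑ l, α l * (∑ j, ∑ R ∈ Finset.univ.filter (fun R : Finset (Fin n) => l ∈ R), w j R) := by
    have e1 : ∀ (R : Finset (Fin n)), ∑ l ∈ R, α l = ∑ l : Fin n, if l ∈ R then α l else 0 := by
      intro R
      rw [← Finset.sum_filter, univ_filter_mem]
    calc ∑ j, ∑ R : Finset (Fin n), (∑ l ∈ R, α l) * w j R
        = ∑ j, ∑ R : Finset (Fin n), ∑ l : Fin n, (if l ∈ R then α l else 0) * w j R := by
          apply Finset.sum_congr rfl; intro j _
          apply Finset.sum_congr rfl; intro R _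
          rw [e1 R, Finset.sum_mul]
      _ = ∑ l : Fin n, ∑ j, ∑ R : Finset (Fin n), (if l ∈ R then α l else 0) * w j R := by
          rw [show (∑ j : Fin k, ∑ R : Finset (Fin n), ∑ l : Fin n,
              (if l ∈ R then α l else 0) * w j R)
              = ∑ j : Fin k, ∑ l : Fin n, ∑ R : Finset (Fin n),
              (if l ∈ R then α l else 0) * w j R from
            Finset.sum_congr rfl (fun j _ => Finset.sum_comm)]
          exact Finset.sum_comm
      _ = ∑ l : Fin n, α l * (∑ j, ∑ R ∈ Finset.univ.filter
            (fun R : Finset (Fin n) => l ∈ R), w j R) := by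
          apply Finset.sum_congr rfl; intro l _
          rw [Finset.mul_sum]
          apply Finset.sum_congr rfl; intro j _
          rw [Finset.mul_sum, Finset.sum_filter]
          apply Finset.sum_congr rfl; intro R _
          by_cases h : l ∈ R <;> simp [h]
  calc ∑ j, c j * lam j = ∑ j, ∑ R : Finset (Fin n), c j * w j R := step1
    _ ≤ ∑ j, ∑ R : Finset (Fin n), (∑ l ∈ R, α l) * w j R := by
        apply Finset.sum_le_sum; intro j _
        apply Finset.sum_le_sum; intro R _
        exact step2 j R
    _ = ∑ l, α l * (∑ j, ∑ R ∈ Finset.univ.filter (fun R : Finset (Fin n) => l ∈ R), w j R) :=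
        step3
    _ ≤ ∑ l, α l * 1 := by
        apply Finset.sum_le_sum; intro l _
        exact mul_le_mul_of_nonneg_left (hwload l) (hα l)
    _ = ∑ l, α l := by simp


end CB

section CD
variable {F : Type*} [Field F] {k i n : ℕ}
lemma converse_dir (hk : 2 ≤ k) (hi : 1 ≤ i) (hik : i ≤ k) (hkn : k ≤ n)
    (hin : i ≤ n) (hni : n - i = k - 1) (hn : n = k + i - 1)
    (G : Matrix (Fin k) (Fin n) F)
    (hstruct : ∀ (j : Fin k) (R : Finset (Fin n)), IsRecoverySet G j R →
      ((j : ℕ) < i ∧ R = {Fin.castLE hkn j}) ∨ k ≤ R.card)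
    (lam : Fin k → ℝ) (w : Fin k → Finset (Fin n) → ℝ)
    (hw : IsValidAllocation G lam w) :
    (∑ j, lam j ≤ (i : ℝ)) ∧
      ∀ A : Finset (Fin k), (∀ j ∈ A, (j : ℕ) < i) →
        (k : ℝ) * ((∑ j ∈ A, lam j) +
            ∑ j ∈ Finset.univ.filter (fun j : Fin k => i ≤ (j : ℕ)), lam j) +
          ∑ j ∈ Finset.univ.filter (fun j : Fin k => (j : ℕ) < i ∧ j ∉ A), lam j
          ≤ ((k : ℝ) + (i : ℝ) - 1) + (A.card : ℝ) * ((k : ℝ) - 1) := by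
  classical
  -- key fact: any recovery set meets the systematic servers
  have hmeets : ∀ (R : Finset (Fin n)), k ≤ R.card →
      1 ≤ (R.filter (fun l : Fin n => (l : ℕ) < i)).card := by
    intro R hR
    have hsplit := Finset.card_filter_add_card_filter_not
      (s := R) (p := fun l : Fin n => (l : ℕ) < i)
    have hsub : R.filter (fun l : Fin n => ¬ (l : ℕ) < i)
        ⊆ Finset.univ.filter (fun l : Fin n => ¬ (l : ℕ) < i) := by
      intro x hx
      rw [Finset.mem_filter] at hx ⊢
      exact ⟨Finset.mem_univ _, hx.2⟩
    have hpar : (Finset.univ.filter (fun l : Fin n => ¬ (l : ℕ) < i)).card = n - i := by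
      have := Finset.card_filter_add_card_filter_not
        (s := (Finset.univ : Finset (Fin n))) (p := fun l : Fin n => (l : ℕ) < i)
      rw [card_filter_lt_fin i hin] at this
      simp only [Finset.card_univ, Fintype.card_fin] at this
      omega
    have := Finset.card_le_card hsub
    omega
  constructor
  · -- total bound
    have hb := converse_bound G lam w hw (fun l => if (l : ℕ) < i then 1 else 0)
      (fun l => by split <;> norm_num) (fun _ => 1) ?_
    · calc ∑ j, lam j = ∑ j, (1 : ℝ) * lam j := by simp
        _ ≤ ∑ l : Fin n, (fun l : Fin n => if (l : ℕ) < i then (1:ℝ) else 0) l := hb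
        _ = (i : ℝ) := by
            dsimp only
            rw [← Finset.sum_filter, Finset.sum_const, card_filter_lt_fin i hin]
            simp
    · intro j R hrec
      rcases hstruct j R hrec with ⟨hj, hR⟩ | hcard
      · rw [hR, Finset.sum_singleton]
        simp only [Fin.coe_castLE]
        rw [if_pos hj]
      · have h1 : ∑ l ∈ R, (if (l : ℕ) < i then (1:ℝ) else 0)
            = ((R.filter (fun l : Fin n => (l : ℕ) < i)).card : ℝ) := by
          rw [← Finset.sum_filter, Finset.sum_const, nsmul_eq_mul, mul_one]
        rw [h1]
        show (1:ℝ) ≤ _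
        exact_mod_cast hmeets R hcard
  · -- per-A bound
    intro A hA
    set A' : Finset (Fin n) := A.image (Fin.castLE hkn) with hA'
    have hmemA' : ∀ j : Fin k, (Fin.castLE hkn j ∈ A') ↔ j ∈ A := by
      intro j
      rw [hA', Finset.mem_image]
      constructor
      · rintro ⟨b, hb, he⟩
        rwa [← Fin.castLE_injective hkn he]
      · intro hj; exact ⟨j, hj, rfl⟩
    set α : Fin n → ℝ := fun l => if l ∈ A' then (k:ℝ) else 1 with hα
    set c : Fin k → ℝ := fun j => if ((j : ℕ) < i ∧ j ∉ A) then 1 else (k:ℝ) with hc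
    have hα0 : ∀ l, 0 ≤ α l := by
      intro l; rw [hα]; dsimp only; split
      · positivity
      · norm_num
    have hα1 : ∀ l, (1:ℝ) ≤ α l := by
      intro l; rw [hα]; dsimp only; split
      · exact_mod_cast hk.trans' (by norm_num)
      · exact le_refl 1
    have hb := converse_bound G lam w hw α hα0 c ?_
    · -- massage both sides
      have hRHS : ∑ l : Fin n, α l = (n : ℝ) + (A.card : ℝ) * ((k:ℝ) - 1) := by
        have hper : ∀ l : Fin n, α l = 1 + (if l ∈ A' then (k:ℝ) - 1 else 0) := by
          intro l; rw [hα]; dsimp only; split <;> ring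
        rw [Finset.sum_congr rfl (fun l _ => hper l), Finset.sum_add_distrib]
        rw [← Finset.sum_filter, univ_filter_mem, Finset.sum_const, Finset.sum_const]
        have hcA' : A'.card = A.card :=
          Finset.card_image_of_injective _ (Fin.castLE_injective hkn)
        rw [hcA']
        simp only [Finset.card_univ, Fintype.card_fin, nsmul_eq_mul, mul_one]
        try ring
      have hLHS : ∑ j, c j * lam j =
          (k : ℝ) * ((∑ j ∈ A, lam j) +
            ∑ j ∈ Finset.univ.filter (fun j : Fin k => i ≤ (j : ℕ)), lam j) +
          ∑ j ∈ Finset.univ.filter (fun j : Fin k => (j : ℕ) < i ∧ j ∉ A), lam j := by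
        have hsplit1 := Finset.sum_filter_add_sum_filter_not
          (Finset.univ : Finset (Fin k)) (fun j : Fin k => (j : ℕ) < i) (fun j => c j * lam j)
        have hsplit2 := Finset.sum_filter_add_sum_filter_not
          (Finset.univ.filter (fun j : Fin k => (j : ℕ) < i)) (fun j : Fin k => j ∈ A)
          (fun j => c j * lam j)
        have hAeq : (Finset.univ.filter (fun j : Fin k => (j : ℕ) < i)).filter
            (fun j : Fin k => j ∈ A) = A := by
          ext j
          simp only [Finset.mem_filter, Finset.mem_univ, true_and]
          exact ⟨fun h => h.2, fun h => ⟨hA j h, h⟩⟩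
        have hCeq : (Finset.univ.filter (fun j : Fin k => (j : ℕ) < i)).filter
            (fun j : Fin k => ¬ j ∈ A) =
            Finset.univ.filter (fun j : Fin k => (j : ℕ) < i ∧ j ∉ A) := by
          rw [Finset.filter_filter]
        have hBeq : Finset.univ.filter (fun j : Fin k => ¬ (j : ℕ) < i) =
            Finset.univ.filter (fun j : Fin k => i ≤ (j : ℕ)) := by
          apply Finset.filter_congr
          intro j _
          simp only [not_lt, eq_iff_iff]
        have honA : ∀ j ∈ A, c j * lam j = (k:ℝ) * lam j := by
          intro j hj
          rw [hc]; dsimp only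
          rw [if_neg (by simp [hj])]
        have honC : ∀ j ∈ Finset.univ.filter (fun j : Fin k => (j:ℕ) < i ∧ j ∉ A),
            c j * lam j = lam j := by
          intro j hj
          obtain ⟨-, hj2⟩ := Finset.mem_filter.mp hj
          rw [hc]; dsimp only; rw [if_pos hj2, one_mul]
        have honB : ∀ j ∈ Finset.univ.filter (fun j : Fin k => i ≤ (j:ℕ)),
            c j * lam j = (k:ℝ) * lam j := by
          intro j hj
          obtain ⟨-, hj2⟩ := Finset.mem_filter.mp hj
          rw [hc]; dsimp only
          rw [if_neg (by rintro ⟨h1, -⟩; omega)]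
        rw [← hsplit1, ← hsplit2, hAeq, hCeq, hBeq,
          Finset.sum_congr rfl honA, Finset.sum_congr rfl honC, Finset.sum_congr rfl honB,
          ← Finset.mul_sum, ← Finset.mul_sum]
        ring
      have hncast : (n:ℝ) = (k:ℝ) + (i:ℝ) - 1 := by
        rw [hn, Nat.cast_sub (by omega)]
        push_cast
        ring
      rw [hLHS, hRHS, hncast] at hb
      exact hb
    · intro j R hrec
      rcases hstruct j R hrec with ⟨hj, hR⟩ | hcard
      · rw [hR, Finset.sum_singleton, hα, hc]; dsimp only
        by_cases hjA : j ∈ A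
        · rw [if_pos ((hmemA' j).mpr hjA), if_neg (by simp [hjA])]
        · rw [if_neg (fun hmem => hjA ((hmemA' j).mp hmem)), if_pos ⟨hj, hjA⟩]
      · have h1 : (R.card : ℝ) ≤ ∑ l ∈ R, α l := by
          calc (R.card:ℝ) = ∑ l ∈ R, (1:ℝ) := by
                rw [Finset.sum_const, nsmul_eq_mul, mul_one]
            _ ≤ ∑ l ∈ R, α l := Finset.sum_le_sum (fun l _ => hα1 l)
        have hck : c j ≤ (k:ℝ) := by
          rw [hc]; dsimp only; split
          · exact_mod_cast Nat.one_le_cast.mpr (by omega)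
          · exact le_refl _
        have h2 : (k:ℝ) ≤ (R.card:ℝ) := by exact_mod_cast hcard
        linarith

end CD

set_option maxHeartbeats 1000000 in
lemma forward_dir {F : Type*} [Field F] {k i n : ℕ}
    (hk : 2 ≤ k) (hi : 1 ≤ i) (hik : i ≤ k) (hkn : k ≤ n) (hin : i ≤ n) (hni : n - i = k - 1)
    (G : Matrix (Fin k) (Fin n) F)
    (hrec1 : ∀ j : Fin k, (j : ℕ) < i → IsRecoverySet G j {Fin.castLE hkn j})
    (hrec2 : ∀ (j : Fin k) (R : Finset (Fin n)), R.card = k →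
      (¬ ∃ l ∈ R, (l : ℕ) < i ∧ (l : ℕ) = (j : ℕ)) → IsRecoverySet G j R)
    (lam : Fin k → ℝ) (hlam0 : ∀ j, 0 ≤ lam j)
    (h1 : ∑ j, lam j ≤ (i : ℝ))
    (h2 : ∀ A : Finset (Fin k), (∀ j ∈ A, (j : ℕ) < i) →
      (k : ℝ) * ((∑ j ∈ A, lam j) +
          ∑ j ∈ Finset.univ.filter (fun j : Fin k => i ≤ (j : ℕ)), lam j) +
        ∑ j ∈ Finset.univ.filter (fun j : Fin k => (j : ℕ) < i ∧ j ∉ A), lam j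
        ≤ ((k : ℝ) + (i : ℝ) - 1) + (A.card : ℝ) * ((k : ℝ) - 1)) :
    ∃ w, IsValidAllocation G lam w := by
  classical
  set ν : Fin k → ℝ := fun j => if (j : ℕ) < i then min (lam j) 1 else 0 with hνdef
  set d : Fin k → ℝ := fun j => lam j - ν j with hddef
  set r : Fin n → ℝ :=
    fun a => if h : (a : ℕ) < i then 1 - ν ⟨(a : ℕ), lt_of_lt_of_le h hik⟩ else 0 with hrdef
  set D : ℝ := ∑ j, d j with hDdef
  set Sp : ℝ := ∑ a, r a with hSpdef
  have hν01 : ∀ j, 0 ≤ ν j ∧ ν j ≤ 1 := by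
    intro j
    rw [hνdef]; dsimp only
    split
    · exact ⟨le_min (hlam0 j) zero_le_one, min_le_right _ _⟩
    · norm_num
  have hνlam : ∀ j, ν j ≤ lam j := by
    intro j
    rw [hνdef]; dsimp only
    split
    · exact min_le_left _ _
    · exact hlam0 j
  have hd0 : ∀ j, 0 ≤ d j := by
    intro j
    rw [hddef]; dsimp only
    linarith [hνlam j]
  have hD0 : 0 ≤ D := Finset.sum_nonneg (fun j _ => hd0 j)
  have hr01 : ∀ a, 0 ≤ r a ∧ r a ≤ 1 := by
    intro a
    rw [hrdef]; dsimp only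
    split
    · constructor <;> linarith [(hν01 ⟨(a : ℕ), lt_of_lt_of_le (by assumption) hik⟩).1,
        (hν01 ⟨(a : ℕ), lt_of_lt_of_le (by assumption) hik⟩).2]
    · norm_num
  -- sum of ν over all of Fin k is its sum over the systematic objects
  have hν_off : ∀ j : Fin k, ¬ (j : ℕ) < i → ν j = 0 := by
    intro j hj
    rw [hνdef]; dsimp only; rw [if_neg hj]
  have hSp_eq : Sp = (i : ℝ) - ∑ j, ν j := by
    have e0 : ∑ j, ν j = ∑ j ∈ Finset.univ.filter (fun j : Fin k => (j : ℕ) < i), ν j := by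
      rw [← Finset.sum_filter_add_sum_filter_not Finset.univ (fun j : Fin k => (j : ℕ) < i) ν]
      rw [Finset.sum_eq_zero (fun j hj => hν_off j (Finset.mem_filter.mp hj).2), add_zero]
    have e1 : Sp = ∑ a ∈ Finset.univ.filter (fun a : Fin n => (a : ℕ) < i), r a := by
      have hz : ∑ a ∈ Finset.univ.filter (fun a : Fin n => ¬ (a : ℕ) < i), r a = 0 := by
        apply Finset.sum_eq_zero
        intro a ha
        rw [hrdef]; dsimp only
        rw [dif_neg (Finset.mem_filter.mp ha).2]
      rw [hSpdef, ← Finset.sum_filter_add_sum_filter_not Finset.univ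
        (fun a : Fin n => (a : ℕ) < i) r, hz, add_zero]
    have e2 : ∑ a ∈ Finset.univ.filter (fun a : Fin n => (a : ℕ) < i), r a
        = ∑ j ∈ Finset.univ.filter (fun j : Fin k => (j : ℕ) < i), (1 - ν j) := by
      apply sum_lt_transfer hin hik
      intro b hbn hbk hbi
      rw [hrdef]; dsimp only
      rw [dif_pos hbi]
    rw [e1, e2, Finset.sum_sub_distrib, Finset.sum_const, card_filter_lt_fin i hik, e0]
    simp
  have hD_eq : D = ∑ j, lam j - ∑ j, ν j := by
    rw [hDdef, hddef, Finset.sum_sub_distrib]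
  have hD_Sp : D ≤ Sp := by
    rw [hD_eq, hSp_eq]
    linarith
  -- the key capacity inequality
  have hkD : (k : ℝ) * D ≤ Sp + ((k : ℝ) - 1) := by
    set A : Finset (Fin k) := Finset.univ.filter (fun j : Fin k => (j : ℕ) < i ∧ 1 < lam j)
      with hAdef
    set B : Finset (Fin k) := Finset.univ.filter (fun j : Fin k => i ≤ (j : ℕ)) with hBdef
    set C : Finset (Fin k) := Finset.univ.filter (fun j : Fin k => (j : ℕ) < i ∧ j ∉ A)
      with hCdef
    have hA : ∀ j ∈ A, (j : ℕ) < i := by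
      intro j hj
      exact (Finset.mem_filter.mp hj).2.1
    have h2A := h2 A hA
    have hsplit : ∀ f : Fin k → ℝ, ∑ j, f j = ∑ j ∈ A, f j + ∑ j ∈ C, f j + ∑ j ∈ B, f j := by
      intro f
      have t1 := Finset.sum_filter_add_sum_filter_not
        (Finset.univ : Finset (Fin k)) (fun j : Fin k => (j : ℕ) < i) f
      have t2 := Finset.sum_filter_add_sum_filter_not
        (Finset.univ.filter (fun j : Fin k => (j : ℕ) < i)) (fun j : Fin k => j ∈ A) f
      have hAeq : (Finset.univ.filter (fun j : Fin k => (j : ℕ) < i)).filter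
          (fun j : Fin k => j ∈ A) = A := by
        ext j
        simp only [Finset.mem_filter, Finset.mem_univ, true_and, hAdef]
        tauto
      have hCeq : (Finset.univ.filter (fun j : Fin k => (j : ℕ) < i)).filter
          (fun j : Fin k => ¬ j ∈ A) = C := by
        rw [hCdef, Finset.filter_filter]
      have hBeq : Finset.univ.filter (fun j : Fin k => ¬ (j : ℕ) < i) = B := by
        rw [hBdef]
        apply Finset.filter_congr
        intro j _
        simp only [not_lt, eq_iff_iff]
      rw [hAeq, hCeq] at t2
      rw [hBeq] at t1
      linarith
    have honA : ∀ j ∈ A, ν j = 1 ∧ d j = lam j - 1 := by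
      intro j hj
      obtain ⟨-, hj1, hj2⟩ := Finset.mem_filter.mp hj
      have hν : ν j = 1 := by
        rw [hνdef]; dsimp only
        rw [if_pos hj1, min_eq_right (le_of_lt hj2)]
      exact ⟨hν, by rw [hddef]; dsimp only; rw [hν]⟩
    have honC : ∀ j ∈ C, ν j = lam j ∧ d j = 0 := by
      intro j hj
      obtain ⟨-, hj1, hj2⟩ := Finset.mem_filter.mp hj
      have hlam1 : lam j ≤ 1 := by
        by_contra hcon
        push_neg at hcon
        exact hj2 (Finset.mem_filter.mpr ⟨Finset.mem_univ _, hj1, hcon⟩)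
      have hν : ν j = lam j := by
        rw [hνdef]; dsimp only
        rw [if_pos hj1, min_eq_left hlam1]
      exact ⟨hν, by rw [hddef]; dsimp only; rw [hν]; ring⟩
    have honB : ∀ j ∈ B, ν j = 0 ∧ d j = lam j := by
      intro j hj
      obtain ⟨-, hj1⟩ := Finset.mem_filter.mp hj
      have hν : ν j = 0 := hν_off j (by omega)
      exact ⟨hν, by rw [hddef]; dsimp only; rw [hν]; ring⟩
    have eDA : ∑ j ∈ A, d j = ∑ j ∈ A, lam j - (A.card : ℝ) := by
      rw [Finset.sum_congr rfl (fun j hj => (honA j hj).2), Finset.sum_sub_distrib,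
        Finset.sum_const, nsmul_eq_mul, mul_one]
    have eDC : ∑ j ∈ C, d j = 0 :=
      Finset.sum_eq_zero (fun j hj => (honC j hj).2)
    have eDB : ∑ j ∈ B, d j = ∑ j ∈ B, lam j :=
      Finset.sum_congr rfl (fun j hj => (honB j hj).2)
    have eνA : ∑ j ∈ A, ν j = (A.card : ℝ) := by
      rw [Finset.sum_congr rfl (fun j hj => (honA j hj).1), Finset.sum_const,
        nsmul_eq_mul, mul_one]
    have eνC : ∑ j ∈ C, ν j = ∑ j ∈ C, lam j :=
      Finset.sum_congr rfl (fun j hj => (honC j hj).1)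
    have eνB : ∑ j ∈ B, ν j = 0 :=
      Finset.sum_eq_zero (fun j hj => (honB j hj).1)
    have hD2 : D = ∑ j ∈ A, lam j - (A.card : ℝ) + ∑ j ∈ B, lam j := by
      rw [hDdef, hsplit d, eDA, eDC, eDB]; ring
    have hν2 : ∑ j, ν j = (A.card : ℝ) + ∑ j ∈ C, lam j := by
      rw [hsplit ν, eνA, eνC, eνB]; ring
    rw [hSp_eq, hD2, hν2]
    try rw [← hBdef] at h2A
    try rw [← hCdef] at h2A
    nlinarith [h2A]
  by_cases hDcase : D ≤ 0
  · -- everything is served by singletons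
    have hDz : D = 0 := le_antisymm hDcase hD0
    have hdz : ∀ j, d j = 0 := by
      intro j
      have hz := (Finset.sum_eq_zero_iff_of_nonneg (fun j _ => hd0 j)).mp (hDdef ▸ hDz)
      exact hz j (Finset.mem_univ j)
    have hlamν : ∀ j, lam j = ν j := by
      intro j
      have h := hdz j
      rw [hddef] at h; dsimp only at h
      linarith
    refine ⟨fun j R => if ((j : ℕ) < i ∧ R = {Fin.castLE hkn j}) then lam j else 0,
      ?_, ?_, ?_, ?_⟩
    · intro j R; dsimp only; split
      · exact hlam0 j
      · exact le_refl 0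
    · intro j R hnrec
      dsimp only
      rw [if_neg]
      rintro ⟨hj, rfl⟩
      exact hnrec (hrec1 j hj)
    · intro j
      have hsw : ∀ R : Finset (Fin n),
          (if ((j : ℕ) < i ∧ R = {Fin.castLE hkn j}) then lam j else 0)
          = (if R = {Fin.castLE hkn j} then (if (j : ℕ) < i then lam j else 0) else 0) := by
        intro R
        by_cases h1' : R = ({Fin.castLE hkn j} : Finset (Fin n)) <;>
          by_cases h2' : (j : ℕ) < i <;> simp [h1', h2']
      rw [Finset.sum_congr rfl (fun R _ => hsw R),
        Finset.sum_ite_eq' Finset.univ ({Fin.castLE hkn j} : Finset (Fin n))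
          (fun _ => if (j : ℕ) < i then lam j else 0)]
      simp only [Finset.mem_univ, if_true]
      split
      · rfl
      · have h := hlamν j
        rw [hν_off j (by assumption)] at h
        exact h.symm
    · intro l
      have hper : ∀ j : Fin k, (∑ R ∈ Finset.univ.filter (fun R : Finset (Fin n) => l ∈ R),
          if ((j : ℕ) < i ∧ R = {Fin.castLE hkn j}) then lam j else 0)
          = if ((j : ℕ) < i ∧ l ∈ ({Fin.castLE hkn j} : Finset (Fin n))) then lam j else 0 :=
        fun j => sum_ite_eq_single_finset _ _ _ _
      rw [Finset.sum_congr rfl (fun j _ => hper j)]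
      by_cases hl : (l : ℕ) < i
      · set j₀ : Fin k := ⟨(l : ℕ), lt_of_lt_of_le hl hik⟩ with hj₀
        have hcond : ∀ j : Fin k,
            ((j : ℕ) < i ∧ l ∈ ({Fin.castLE hkn j} : Finset (Fin n))) ↔ j = j₀ := by
          intro j
          constructor
          · rintro ⟨hj, hmem⟩
            rw [Finset.mem_singleton] at hmem
            apply Fin.ext
            rw [hj₀]
            have := congrArg Fin.val hmem
            simpa using this.symm
          · rintro rfl
            refine ⟨hl, ?_⟩
            rw [Finset.mem_singleton]
            apply Fin.ext
            simp [hj₀]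
        rw [Finset.sum_congr rfl (fun j _ => if_congr (hcond j) rfl rfl),
          Finset.sum_ite_eq' Finset.univ j₀ lam]
        simp only [Finset.mem_univ, if_true]
        calc lam j₀ = ν j₀ := hlamν j₀
          _ ≤ 1 := (hν01 j₀).2
      · rw [Finset.sum_eq_zero]
        · norm_num
        · intro j _
          rw [if_neg]
          rintro ⟨hj, hmem⟩
          rw [Finset.mem_singleton] at hmem
          apply hl
          have := congrArg Fin.val hmem
          simp at this
          omega
  · push_neg at hDcase
    -- D > 0 : build the scaled usage vector t'
    set t : Fin n → ℝ := fun a => min 1 (r a / D) with htdef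
    have ht01 : ∀ a, 0 ≤ t a ∧ t a ≤ 1 := by
      intro a
      rw [htdef]; dsimp only
      exact ⟨le_min zero_le_one (div_nonneg (hr01 a).1 hDcase.le), min_le_left _ _⟩
    set T : ℝ := ∑ a, t a with hTdef
    have hTsum : T = ∑ a, min 1 (r a / D) := by
      rw [hTdef]
    have hT1 : 1 ≤ T := by
      have hmin := sum_min_le_sum Finset.univ (fun a => r a / D)
        (fun a _ => div_nonneg (hr01 a).1 hDcase.le) 1 zero_le_one
      rw [← Finset.sum_div] at hmin
      have hSpD : (1:ℝ) ≤ Sp / D := (one_le_div hDcase).mpr hD_Sp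
      have heq : min 1 (Sp / D) = 1 := min_eq_left hSpD
      rw [← hSpdef] at hmin
      rw [hTsum]
      calc (1:ℝ) = min 1 (Sp/D) := heq.symm
        _ ≤ _ := hmin
    have hT0 : 0 < T := lt_of_lt_of_le zero_lt_one hT1
    set σ : ℝ := min T (k:ℝ) with hσdef
    have hk1 : (1:ℝ) ≤ (k:ℝ) := Nat.one_le_cast.mpr (by omega)
    have hσ1 : 1 ≤ σ := le_min hT1 hk1
    have hσT : σ ≤ T := min_le_left _ _
    have hσk : σ ≤ (k:ℝ) := min_le_right _ _
    set t' : Fin n → ℝ := fun a => t a * (σ / T) with ht'def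
    have hfrac0 : 0 ≤ σ / T := div_nonneg (by linarith) hT0.le
    have hfrac1 : σ / T ≤ 1 := (div_le_one hT0).mpr hσT
    have ht'le : ∀ a, t' a ≤ t a := by
      intro a
      rw [ht'def]; dsimp only
      calc t a * (σ / T) ≤ t a * 1 := mul_le_mul_of_nonneg_left hfrac1 (ht01 a).1
        _ = t a := mul_one _
    have ht'01 : ∀ a, 0 ≤ t' a ∧ t' a ≤ 1 := by
      intro a
      constructor
      · rw [ht'def]; exact mul_nonneg (ht01 a).1 hfrac0
      · exact le_trans (ht'le a) (ht01 a).2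
    have ht'sum : ∑ a, t' a = σ := by
      have : ∑ a, t' a = T * (σ / T) := by
        rw [hTdef, Finset.sum_mul]
      rw [this]
      field_simp
    have hDt' : ∀ a, D * t' a ≤ r a := by
      intro a
      have h2' : t a ≤ r a / D := by rw [htdef]; exact min_le_right _ _
      calc D * t' a ≤ D * (r a / D) :=
            mul_le_mul_of_nonneg_left ((ht'le a).trans h2') hDcase.le
        _ = r a := by field_simp
    have hrt' : ∀ a : Fin n, t' a ≠ 0 → 0 < r a := by
      intro a ha
      by_contra hcon
      push_neg at hcon
      have hr0 : r a = 0 := le_antisymm hcon (hr01 a).1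
      apply ha
      rw [ht'def]; dsimp only
      rw [htdef]; dsimp only
      rw [hr0]
      norm_num
    have hrlt : ∀ a : Fin n, 0 < r a → (a : ℕ) < i := by
      intro a ha
      by_contra hcon
      rw [hrdef] at ha; dsimp only at ha
      rw [dif_neg hcon] at ha
      exact lt_irrefl 0 ha
    -- parity budget
    have hk1R : (0:ℝ) < (k:ℝ) - 1 := by
      have : (2:ℝ) ≤ (k:ℝ) := by exact_mod_cast hk
      linarith
    have hpar : D * ((k:ℝ) - σ) ≤ (k:ℝ) - 1 := by
      rcases min_cases T (k:ℝ) with ⟨he, hle⟩ | ⟨he, hlt⟩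
      · -- σ = T
        rw [hσdef, he]
        have hDT : D * T = ∑ a, min D (r a) := by
          rw [hTsum, Finset.mul_sum]
          apply Finset.sum_congr rfl
          intro a _
          rcases le_total (r a / D) 1 with h | h
          · rw [min_eq_right h, min_eq_right (by
              calc r a = D * (r a / D) := by field_simp
                _ ≤ D * 1 := mul_le_mul_of_nonneg_left h hDcase.le
                _ = D := mul_one _)]
            field_simp
          · rw [min_eq_left h, min_eq_left (by
              calc D = D * 1 := (mul_one _).symm
                _ ≤ D * (r a / D) := mul_le_mul_of_nonneg_left h hDcase.le
                _ = r a := by field_simp)]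
            ring
        by_cases hD1 : 1 ≤ D
        · have hSpmin : ∑ a, min D (r a) = Sp := by
            rw [hSpdef]
            apply Finset.sum_congr rfl
            intro a _
            exact min_eq_right (le_trans (hr01 a).2 hD1)
          have : D * T = Sp := by rw [hDT, hSpmin]
          nlinarith [hkD]
        · push_neg at hD1
          have hminD : min D Sp ≤ ∑ a, min D (r a) := by
            have := sum_min_le_sum Finset.univ r (fun a _ => (hr01 a).1) D hDcase.le
            rwa [← hSpdef] at this
          have hDSp : min D Sp = D := min_eq_left hD_Sp
          have hDT2 : D ≤ D * T := by rw [← hDT] at hminD; linarith [hDSp ▸ hminD]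
          nlinarith
      · -- σ = k
        rw [hσdef, he]
        have : D * ((k:ℝ) - (k:ℝ)) = 0 := by ring
        rw [this]
        linarith
    -- decomposition of t' into indicator vectors
    obtain ⟨W, hW0, hWsum1, hWa, hWcard⟩ := decomp_main (k := k) (m := n) _ t' le_rfl
      (fun a => (ht'01 a).1) (fun a => (ht'01 a).2)
      (by rw [ht'sum]; exact hσ1) (by rw [ht'sum]; exact hσk)
    have hWsupp : ∀ S, W S ≠ 0 → ∀ a ∈ S, t' a ≠ 0 := by
      intro S hS a ha
      have hpos : 0 < W S := lt_of_le_of_ne (hW0 S) (Ne.symm hS)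
      have hle : W S ≤ t' a := by
        rw [← hWa a]
        exact Finset.single_le_sum (fun S' _ => hW0 S')
          (Finset.mem_filter.mpr ⟨Finset.mem_univ _, ha⟩)
      intro hz
      rw [hz] at hle
      linarith
    -- systematic / parity decomposition of server sets
    have hsysF_par : ∀ (S T : Finset (Fin n)),
        S ⊆ Finset.univ.filter (fun a : Fin n => (a : ℕ) < i) →
        T ⊆ Finset.univ.filter (fun a : Fin n => ¬ (a : ℕ) < i) →
        (S ∪ T).filter (fun a : Fin n => (a : ℕ) < i) = S ∧ (S ∪ T).card = S.card + T.card := by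
      intro S T hS hT
      constructor
      · ext a
        simp only [Finset.mem_filter, Finset.mem_union]
        constructor
        · rintro ⟨h | h, hlt⟩
          · exact h
          · exact absurd hlt (Finset.mem_filter.mp (hT h)).2
        · intro h
          exact ⟨Or.inl h, (Finset.mem_filter.mp (hS h)).2⟩
      · apply Finset.card_union_of_disjoint
        rw [Finset.disjoint_left]
        intro a haS haT
        exact (Finset.mem_filter.mp (hT haT)).2 (Finset.mem_filter.mp (hS haS)).2
    have hparcard : (Finset.univ.filter (fun a : Fin n => ¬ (a : ℕ) < i)).card = k - 1 := by
      have h := Finset.card_filter_add_card_filter_not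
        (s := (Finset.univ : Finset (Fin n))) (p := fun a : Fin n => (a : ℕ) < i)
      rw [card_filter_lt_fin i hin] at h
      simp only [Finset.card_univ, Fintype.card_fin] at h
      omega
    have hWsub : ∀ S, W S ≠ 0 → S ⊆ Finset.univ.filter (fun a : Fin n => (a : ℕ) < i) := by
      intro S hS a ha
      exact Finset.mem_filter.mpr ⟨Finset.mem_univ _, hrlt a (hrt' a (hWsupp S hS a ha))⟩
    set w2 : Fin k → Finset (Fin n) → ℝ := fun j R => if R.card = k
      then d j * W (R.filter (fun a : Fin n => (a : ℕ) < i)) /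
        (((k-1).choose (k - (R.filter (fun a : Fin n => (a : ℕ) < i)).card) : ℕ) : ℝ)
      else 0 with hw2def
    have hchoose_pos : ∀ (S : Finset (Fin n)), W S ≠ 0 →
        0 < ((k-1).choose (k - S.card)) := by
      intro S hS
      obtain ⟨hc1, hck⟩ := hWcard S hS
      exact Nat.choose_pos (by omega)
    have hinner : ∀ (j : Fin k) (S : Finset (Fin n)),
        S ∈ (Finset.univ.filter (fun a : Fin n => (a : ℕ) < i)).powerset →
        ∑ T ∈ (Finset.univ.filter (fun a : Fin n => ¬ (a : ℕ) < i)).powerset, w2 j (S ∪ T)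
          = d j * W S := by
      intro j S hS
      rw [Finset.mem_powerset] at hS
      have hterm : ∀ T ∈ (Finset.univ.filter (fun a : Fin n => ¬ (a : ℕ) < i)).powerset,
          w2 j (S ∪ T) = if S.card + T.card = k
            then d j * W S / (((k-1).choose (k - S.card) : ℕ) : ℝ) else 0 := by
        intro T hT
        rw [Finset.mem_powerset] at hT
        obtain ⟨he1, he2⟩ := hsysF_par S T hS hT
        rw [hw2def]; dsimp only
        rw [he1, he2]
      rw [Finset.sum_congr rfl hterm]
      by_cases hWS : W S = 0
      · rw [hWS, Finset.sum_eq_zero]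
        · ring
        · intro T _
          split <;> simp
      · obtain ⟨hc1, hck⟩ := hWcard S hWS
        have hcpos := hchoose_pos S hWS
        have hcond : ∀ T : Finset (Fin n), (S.card + T.card = k) ↔ (T.card = k - S.card) := by
          intro T; omega
        rw [Finset.sum_congr rfl (fun T _ => if_congr (hcond T) rfl rfl),
          ← Finset.sum_filter, ← Finset.powersetCard_eq_filter,
          Finset.sum_const, Finset.card_powersetCard, hparcard, nsmul_eq_mul]
        have hne : (((k-1).choose (k - S.card) : ℕ) : ℝ) ≠ 0 := by
          exact_mod_cast Nat.pos_iff_ne_zero.mp hcpos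
        field_simp
    have hpowsum : ∀ (g : Finset (Fin n) → ℝ), (∀ S, W S ≠ 0 → True) →
        True := fun _ _ => trivial
    have hWpow : ∑ S ∈ (Finset.univ.filter (fun a : Fin n => (a : ℕ) < i)).powerset, W S
        = 1 := by
      rw [← hWsum1]
      apply Finset.sum_subset (Finset.subset_univ _)
      intro S _ hS
      by_contra hne
      exact hS (Finset.mem_powerset.mpr (hWsub S hne))
    have hobj2 : ∀ j, ∑ R : Finset (Fin n), w2 j R = d j := by
      intro j
      rw [sum_split_finsets i (w2 j),
        Finset.sum_congr rfl (fun S hS => hinner j S hS), ← Finset.mul_sum, hWpow, mul_one]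
    have hobj1 : ∀ j : Fin k, (∑ R : Finset (Fin n),
        if ((j : ℕ) < i ∧ R = {Fin.castLE hkn j}) then ν j else 0)
        = if (j : ℕ) < i then ν j else 0 := by
      intro j
      have hsw : ∀ R : Finset (Fin n),
          (if ((j:ℕ) < i ∧ R = {Fin.castLE hkn j}) then ν j else 0)
          = (if R = {Fin.castLE hkn j} then (if (j:ℕ) < i then ν j else 0) else 0) := by
        intro R
        by_cases h1' : R = ({Fin.castLE hkn j} : Finset (Fin n)) <;>
          by_cases h2' : (j:ℕ) < i <;> simp [h1', h2']
      rw [Finset.sum_congr rfl (fun R _ => hsw R),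
        Finset.sum_ite_eq' Finset.univ ({Fin.castLE hkn j} : Finset (Fin n))
          (fun _ => if (j:ℕ) < i then ν j else 0)]
      simp
    -- total size of sets used
    have hWsize : ∑ S : Finset (Fin n), W S * (S.card : ℝ) = σ := by
      have e : ∀ S : Finset (Fin n), W S * (S.card:ℝ)
          = ∑ a : Fin n, (if a ∈ S then W S else 0) := by
        intro S
        rw [Finset.sum_ite_mem, Finset.univ_inter, Finset.sum_const, nsmul_eq_mul]
        ring
      rw [Finset.sum_congr rfl (fun S _ => e S), Finset.sum_comm]
      calc ∑ a : Fin n, ∑ S : Finset (Fin n), (if a ∈ S then W S else 0)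
          = ∑ a : Fin n, t' a := by
            apply Finset.sum_congr rfl
            intro a _
            rw [← Finset.sum_filter, hWa a]
        _ = σ := ht'sum
    -- first-layer load
    have hload1 : ∀ (l : Fin n) (hl : (l:ℕ) < i),
        (∑ j : Fin k, ∑ R ∈ Finset.univ.filter (fun R : Finset (Fin n) => l ∈ R),
          if ((j:ℕ) < i ∧ R = {Fin.castLE hkn j}) then ν j else 0)
        = ν ⟨(l:ℕ), lt_of_lt_of_le hl hik⟩ := by
      intro l hl
      have hper : ∀ j : Fin k, (∑ R ∈ Finset.univ.filter (fun R : Finset (Fin n) => l ∈ R),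
          if ((j : ℕ) < i ∧ R = {Fin.castLE hkn j}) then ν j else 0)
          = if ((j : ℕ) < i ∧ l ∈ ({Fin.castLE hkn j} : Finset (Fin n))) then ν j else 0 :=
        fun j => sum_ite_eq_single_finset _ _ _ _
      rw [Finset.sum_congr rfl (fun j _ => hper j)]
      set j₀ : Fin k := ⟨(l : ℕ), lt_of_lt_of_le hl hik⟩ with hj₀
      have hcond : ∀ j : Fin k,
          ((j : ℕ) < i ∧ l ∈ ({Fin.castLE hkn j} : Finset (Fin n))) ↔ j = j₀ := by
        intro j
        constructor
        · rintro ⟨hj, hmem⟩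
          rw [Finset.mem_singleton] at hmem
          apply Fin.ext
          rw [hj₀]
          have := congrArg Fin.val hmem
          simpa using this.symm
        · rintro rfl
          refine ⟨hl, ?_⟩
          rw [Finset.mem_singleton]
          apply Fin.ext
          simp [hj₀]
      rw [Finset.sum_congr rfl (fun j _ => if_congr (hcond j) rfl rfl),
        Finset.sum_ite_eq' Finset.univ j₀ ν]
      simp only [Finset.mem_univ, if_true]
    have hload1' : ∀ (l : Fin n), ¬ (l:ℕ) < i →
        (∑ j : Fin k, ∑ R ∈ Finset.univ.filter (fun R : Finset (Fin n) => l ∈ R),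
          if ((j:ℕ) < i ∧ R = {Fin.castLE hkn j}) then ν j else 0) = 0 := by
      intro l hl
      have hper : ∀ j : Fin k, (∑ R ∈ Finset.univ.filter (fun R : Finset (Fin n) => l ∈ R),
          if ((j : ℕ) < i ∧ R = {Fin.castLE hkn j}) then ν j else 0)
          = if ((j : ℕ) < i ∧ l ∈ ({Fin.castLE hkn j} : Finset (Fin n))) then ν j else 0 :=
        fun j => sum_ite_eq_single_finset _ _ _ _
      rw [Finset.sum_congr rfl (fun j _ => hper j)]
      apply Finset.sum_eq_zero
      intro j _
      rw [if_neg]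
      rintro ⟨hj, hmem⟩
      rw [Finset.mem_singleton] at hmem
      apply hl
      have := congrArg Fin.val hmem
      simp at this
      omega
    -- second-layer load on systematic servers
    have hload2sys : ∀ (l : Fin n), (l:ℕ) < i →
        (∑ j : Fin k, ∑ R ∈ Finset.univ.filter (fun R : Finset (Fin n) => l ∈ R), w2 j R)
          = D * t' l := by
      intro l hl
      have hper : ∀ j : Fin k,
          (∑ R ∈ Finset.univ.filter (fun R : Finset (Fin n) => l ∈ R), w2 j R)
            = d j * t' l := by
        intro j
        rw [Finset.sum_filter, sum_split_finsets i (fun R => if l ∈ R then w2 j R else 0)]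
        have hinner2 : ∀ S ∈ (Finset.univ.filter (fun a : Fin n => (a : ℕ) < i)).powerset,
            (∑ T ∈ (Finset.univ.filter (fun a : Fin n => ¬ (a : ℕ) < i)).powerset,
              if l ∈ S ∪ T then w2 j (S ∪ T) else 0)
            = if l ∈ S then d j * W S else 0 := by
          intro S hS
          have hcongr : ∀ T ∈ (Finset.univ.filter (fun a : Fin n => ¬ (a:ℕ) < i)).powerset,
              (if l ∈ S ∪ T then w2 j (S ∪ T) else 0) = (if l ∈ S then w2 j (S ∪ T) else 0) := by
            intro T hT
            rw [Finset.mem_powerset] at hT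
            have hiff : l ∈ S ∪ T ↔ l ∈ S := by
              rw [Finset.mem_union]
              constructor
              · rintro (h | h)
                · exact h
                · exact absurd hl (Finset.mem_filter.mp (hT h)).2
              · exact Or.inl
            rw [if_congr hiff rfl rfl]
          rw [Finset.sum_congr rfl hcongr]
          by_cases hlS : l ∈ S
          · simp only [hlS, if_true]
            exact hinner j S hS
          · simp only [hlS, if_false]
            exact Finset.sum_const_zero
        rw [Finset.sum_congr rfl hinner2, ← Finset.sum_filter]
        have hext : ∑ S ∈ ((Finset.univ.filter
              (fun a : Fin n => (a : ℕ) < i)).powerset.filter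
              (fun S : Finset (Fin n) => l ∈ S)), d j * W S
            = ∑ S ∈ Finset.univ.filter (fun S : Finset (Fin n) => l ∈ S), d j * W S := by
          apply Finset.sum_subset
          · intro S hS
            rw [Finset.mem_filter] at hS ⊢
            exact ⟨Finset.mem_univ _, hS.2⟩
          · intro S hS1 hS2
            rw [Finset.mem_filter] at hS1
            by_cases hW : W S = 0
            · rw [hW, mul_zero]
            · exfalso
              apply hS2
              rw [Finset.mem_filter, Finset.mem_powerset]
              exact ⟨hWsub S hW, hS1.2⟩
        rw [hext, ← Finset.mul_sum, hWa l]
      rw [Finset.sum_congr rfl (fun j _ => hper j), ← Finset.sum_mul, ← hDdef]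
    -- second-layer load on parity servers
    have hcastk1 : ((k-1 : ℕ) : ℝ) = (k:ℝ) - 1 := by
      rw [Nat.cast_sub (by omega)]
      norm_num
    have hload2par : ∀ (l : Fin n), ¬ (l:ℕ) < i →
        (∑ j : Fin k, ∑ R ∈ Finset.univ.filter (fun R : Finset (Fin n) => l ∈ R), w2 j R)
          = D * ((k:ℝ) - σ) / ((k:ℝ) - 1) := by
      intro l hl
      have hlpar : l ∈ Finset.univ.filter (fun a : Fin n => ¬ (a:ℕ) < i) :=
        Finset.mem_filter.mpr ⟨Finset.mem_univ _, hl⟩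
      have hper : ∀ j : Fin k,
          (∑ R ∈ Finset.univ.filter (fun R : Finset (Fin n) => l ∈ R), w2 j R)
            = d j * ((k:ℝ) - σ) / ((k:ℝ) - 1) := by
        intro j
        rw [Finset.sum_filter, sum_split_finsets i (fun R => if l ∈ R then w2 j R else 0)]
        have hinner2 : ∀ S ∈ (Finset.univ.filter (fun a : Fin n => (a : ℕ) < i)).powerset,
            (∑ T ∈ (Finset.univ.filter (fun a : Fin n => ¬ (a : ℕ) < i)).powerset,
              if l ∈ S ∪ T then w2 j (S ∪ T) else 0)
            = d j * W S * ((k:ℝ) - (S.card:ℝ)) / ((k:ℝ) - 1) := by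
          intro S hS
          rw [Finset.mem_powerset] at hS
          have hSk_le : S.card ≤ k := le_trans (Finset.card_le_card hS)
            (by rw [card_filter_lt_fin i hin]; exact hik)
          have hterm : ∀ T ∈ (Finset.univ.filter (fun a : Fin n => ¬ (a:ℕ) < i)).powerset,
              (if l ∈ S ∪ T then w2 j (S ∪ T) else 0)
              = if (T.card = k - S.card ∧ l ∈ T)
                  then d j * W S / (((k-1).choose (k - S.card) : ℕ) : ℝ) else 0 := by
            intro T hT
            rw [Finset.mem_powerset] at hT
            obtain ⟨he1, he2⟩ := hsysF_par S T hS hT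
            have hlS : l ∉ S := fun hmem => hl (Finset.mem_filter.mp (hS hmem)).2
            have hiff : l ∈ S ∪ T ↔ l ∈ T := by
              rw [Finset.mem_union]
              constructor
              · rintro (h | h)
                · exact absurd h hlS
                · exact h
              · exact Or.inr
            rw [hw2def]; dsimp only
            rw [he1, he2]
            by_cases hlT : l ∈ T
            · rw [if_pos (hiff.mpr hlT)]
              by_cases hck' : S.card + T.card = k
              · rw [if_pos hck', if_pos ⟨by omega, hlT⟩]
              · rw [if_neg hck', if_neg (by rintro ⟨hc, -⟩; omega)]
            · rw [if_neg (fun h => hlT (hiff.mp h)), if_neg (by rintro ⟨-, h⟩; exact hlT h)]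
          rw [Finset.sum_congr rfl hterm]
          by_cases hWS : W S = 0
          · rw [hWS, Finset.sum_eq_zero]
            · ring
            · intro T _
              split <;> simp
          · obtain ⟨hc1, hck⟩ := hWcard S hWS
            have hcpos := hchoose_pos S hWS
            rw [← Finset.sum_filter, Finset.sum_const, nsmul_eq_mul]
            by_cases hSk : S.card = k
            · -- no parity needed, both sides vanish
              have hempty : ((Finset.univ.filter (fun a : Fin n => ¬ (a:ℕ) < i)).powerset.filter
                  (fun T : Finset (Fin n) => T.card = k - S.card ∧ l ∈ T)) = ∅ := by
                rw [Finset.filter_eq_empty_iff]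
                rintro T _ ⟨hTc, hTl⟩
                rw [hSk, Nat.sub_self] at hTc
                rw [Finset.card_eq_zero.mp hTc] at hTl
                exact absurd hTl (Finset.notMem_empty l)
              rw [hempty]
              have : ((k:ℝ) - (S.card:ℝ)) = 0 := by
                rw [hSk]; ring
              rw [this]
              simp
            · have hc1' : 1 ≤ k - S.card := by omega
              rw [count_subsets_containing _ l hlpar _ hc1', hparcard]
              -- arithmetic: (k-1-1).choose (k - S.card - 1) * (d j * W S / (k-1).choose (k-S.card))
              --   = d j * W S * (k - S.card) / (k - 1)
              have hid : (k-1) * ((k-1-1).choose (k - S.card - 1))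
                  = ((k-1).choose (k - S.card)) * (k - S.card) := by
                have h := Nat.add_one_mul_choose_eq (k-1-1) (k - S.card - 1)
                have e1 : k-1-1+1 = k-1 := by omega
                have e2 : k - S.card - 1 + 1 = k - S.card := by omega
                rw [e1, e2] at h
                exact h
              have hidR : ((k:ℝ) - 1) * (((k-1-1).choose (k - S.card - 1) : ℕ) : ℝ)
                  = ((((k-1).choose (k - S.card)) : ℕ) : ℝ) * ((k:ℝ) - (S.card:ℝ)) := by
                have := congrArg (fun x : ℕ => (x : ℝ)) hid
                push_cast at this
                rw [← hcastk1]
                rw [show ((k:ℝ) - (S.card:ℝ)) = (((k - S.card : ℕ)) : ℝ) by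
                  rw [Nat.cast_sub hck]]
                exact_mod_cast this
              have hchne : ((((k-1).choose (k - S.card)) : ℕ) : ℝ) ≠ 0 := by
                exact_mod_cast Nat.pos_iff_ne_zero.mp hcpos
              field_simp
              linear_combination d j * hidR
        rw [Finset.sum_congr rfl hinner2]
        -- extend from powerset to all finsets
        have hext : ∑ S ∈ (Finset.univ.filter (fun a : Fin n => (a : ℕ) < i)).powerset,
              d j * W S * ((k:ℝ) - (S.card:ℝ)) / ((k:ℝ) - 1)
            = ∑ S : Finset (Fin n), d j * W S * ((k:ℝ) - (S.card:ℝ)) / ((k:ℝ) - 1) := by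
          apply Finset.sum_subset (Finset.subset_univ _)
          intro S _ hS
          by_cases hW : W S = 0
          · rw [hW]; ring
          · exact absurd (Finset.mem_powerset.mpr (hWsub S hW)) hS
        rw [hext, ← Finset.sum_div]
        have hnum : ∑ S : Finset (Fin n), d j * W S * ((k:ℝ) - (S.card:ℝ))
            = d j * ((k:ℝ) - σ) := by
          have e : ∀ S : Finset (Fin n), d j * W S * ((k:ℝ) - (S.card:ℝ))
              = ((k:ℝ) * d j) * W S - d j * (W S * (S.card:ℝ)) := by intro S; ring
          rw [Finset.sum_congr rfl (fun S _ => e S), Finset.sum_sub_distrib,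
            ← Finset.mul_sum, ← Finset.mul_sum, hWsum1, hWsize]
          ring
        rw [hnum, mul_div_assoc]
      rw [Finset.sum_congr rfl (fun j _ => hper j)]
      rw [show (∑ j : Fin k, d j * ((k:ℝ) - σ) / ((k:ℝ) - 1))
          = (∑ j : Fin k, d j) * ((k:ℝ) - σ) / ((k:ℝ) - 1) by
        rw [← Finset.sum_div, ← Finset.sum_mul]]
    -- assemble the allocation
    refine ⟨fun j R => (if ((j : ℕ) < i ∧ R = {Fin.castLE hkn j}) then ν j else 0) + w2 j R,
      ?_, ?_, ?_, ?_⟩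
    · intro j R
      dsimp only
      have h1' : (0:ℝ) ≤ if ((j : ℕ) < i ∧ R = {Fin.castLE hkn j}) then ν j else 0 := by
        split
        · exact (hν01 j).1
        · exact le_refl 0
      have h2' : 0 ≤ w2 j R := by
        rw [hw2def]; dsimp only
        split
        · exact div_nonneg (mul_nonneg (hd0 j) (hW0 _)) (Nat.cast_nonneg _)
        · exact le_refl 0
      linarith
    · intro j R hnrec
      dsimp only
      have h1' : (if ((j : ℕ) < i ∧ R = {Fin.castLE hkn j}) then ν j else 0) = 0 := by
        rw [if_neg]
        rintro ⟨hj, rfl⟩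
        exact hnrec (hrec1 j hj)
      have h2' : w2 j R = 0 := by
        rw [hw2def]; dsimp only
        split
        case isFalse => rfl
        case isTrue hcard =>
          by_contra hne
          have hmul : d j * W (R.filter (fun a : Fin n => (a : ℕ) < i)) ≠ 0 := by
            intro h
            exact hne (by rw [h, zero_div])
          obtain ⟨hdj, hWS⟩ := mul_ne_zero_iff.mp hmul
          apply hnrec
          apply hrec2 j R hcard
          rintro ⟨l, hlR, hli, hlj⟩
          have hlS : l ∈ R.filter (fun a : Fin n => (a : ℕ) < i) :=
            Finset.mem_filter.mpr ⟨hlR, hli⟩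
          have hrpos : 0 < r l := hrt' l (hWsupp _ hWS l hlS)
          rw [hrdef] at hrpos; dsimp only at hrpos
          rw [dif_pos hli] at hrpos
          have hji : (j:ℕ) < i := by omega
          have heqj : (⟨(l:ℕ), lt_of_lt_of_le hli hik⟩ : Fin k) = j := Fin.ext hlj
          rw [heqj] at hrpos
          -- now ν j < 1, so lam j < 1, so d j = 0
          have hνlt : ν j < 1 := by linarith
          rw [hνdef] at hνlt; dsimp only at hνlt
          rw [if_pos hji] at hνlt
          have hlam1 : lam j < 1 := by
            rcases min_lt_iff.mp hνlt with h | h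
            · exact h
            · linarith
          apply hdj
          rw [hddef]; dsimp only
          rw [hνdef]; dsimp only
          rw [if_pos hji, min_eq_left hlam1.le]
          ring
      rw [h1', h2', add_zero]
    · intro j
      rw [Finset.sum_add_distrib, hobj1 j, hobj2 j]
      by_cases hj : (j:ℕ) < i
      · rw [if_pos hj]
        have : d j = lam j - ν j := by rw [hddef]
        linarith
      · rw [if_neg hj]
        have h1' : d j = lam j - ν j := by rw [hddef]
        have h2' := hν_off j hj
        linarith
    · intro l
      rw [Finset.sum_congr rfl (fun j (_ : j ∈ Finset.univ) => Finset.sum_add_distrib),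
        Finset.sum_add_distrib]
      by_cases hl : (l:ℕ) < i
      · rw [hload1 l hl, hload2sys l hl]
        have hDt := hDt' l
        have hrl : r l = 1 - ν ⟨(l:ℕ), lt_of_lt_of_le hl hik⟩ := by
          rw [hrdef]; dsimp only
          rw [dif_pos hl]
        rw [hrl] at hDt
        linarith
      · rw [hload1' l hl, hload2par l hl, zero_add, div_le_one hk1R]
        exact hpar


theorem srr_characterization_n_eq_k_add_i_sub_one
    {F : Type*} [Field F] [Fintype F] {k i : ℕ} (hk : 2 ≤ k) (hi : 1 ≤ i) (hik : i ≤ k)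
    (hq : k + (k + i - 1) + 1 ≤ Fintype.card F)
    (M : Matrix (Fin k) (Fin (k + (k + i - 1))) F)
    (hsys : ∀ j : Fin k, ∀ r : Fin k,
      M r (Fin.castAdd (k + i - 1) j) = if r = j then (1 : F) else 0)
    (hMDS : ∀ S : Finset (Fin (k + (k + i - 1))), S.card = k →
      LinearIndependent F (fun l : S => Mᵀ (l : Fin (k + (k + i - 1)))))
    (lam : Fin k → ℝ) (hlam0 : ∀ j, 0 ≤ lam j) :
    lam ∈ ServiceRegion (Gmat M i : Matrix (Fin k) (Fin (k + i - 1)) F) ↔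
      ((∑ j, lam j ≤ (i : ℝ)) ∧
        ∀ A : Finset (Fin k), (∀ j ∈ A, (j : ℕ) < i) →
          (k : ℝ) * ((∑ j ∈ A, lam j) +
        ∑ j ∈ Finset.univ.filter (fun j : Fin k => i ≤ (j : ℕ)), lam j) +
      ∑ j ∈ Finset.univ.filter (fun j : Fin k => (j : ℕ) < i ∧ j ∉ A), lam j
            ≤ ((k : ℝ) + (i : ℝ) - 1) + (A.card : ℝ) * ((k : ℝ) - 1)) := by
  classical
  have hkn : k ≤ k + i - 1 := by omega
  have hin : i ≤ k + i - 1 := by omega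
  have hni : (k + i - 1) - i = k - 1 := by omega
  have hn : k + i - 1 = k + (k + i - 1) - (k + i - 1) + i - 1 := by omega
  have hkpos : 0 < k := by omega
  constructor
  · intro hmem
    simp only [ServiceRegion, Set.mem_setOf_eq] at hmem
    obtain ⟨h0, w, hw⟩ := hmem
    exact converse_dir hk hi hik hkn hin hni rfl (Gmat M i)
      (fun j R hrec => recovery_structure M hsys hMDS hik hkpos hkn j R hrec) lam w hw
  · rintro ⟨ha, hb⟩
    simp only [ServiceRegion, Set.mem_setOf_eq]
    exact ⟨hlam0, forward_dir hk hi hik hkn hin hni (Gmat M i)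
      (fun j hj => recovery_singleton M hsys hik j hj hkn)
      (fun j R hc hnot => recovery_card_k M hsys hMDS hik hkpos j R hc hnot)
      lam hlam0 ha hb⟩
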